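/- arXiv:1812.09370 — 7 statements merged into one kernel-verified Lean document; each statement's English description precedes it below -/
import Mathlib

section
/- Let S = clade(T₁) ∪ clade(T₂) for rooted trees T₁, T₂ on leaf set [n], and let CIP(S) be the poset (ordered by inclusion) consisting of all elements of S together with all intersections of elements of S having at least two elements. Then every element of CIP(S) \ S is the intersection of exactly two elements of S, and CIP(S) is a join-semilattice: any two elements A, B ∈ CIP(S) have a least upper bound in CIP(S). -/
/-- A rooted tree on leaf set `[n]`, identified with its family of clades. -/
def IsCladeFamily {n : ℕ} (F : Finset (Finset (Fin n))) : Prop :=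
  Finset.univ ∈ F ∧ (∀ i : Fin n, {i} ∈ F) ∧
  ∀ A ∈ F, ∀ B ∈ F, A ⊆ B ∨ B ⊆ A ∨ Disjoint A B

/-- The clade intersection poset `CIP(S)`: the members of `S` together with all
intersections of (one or more) members of `S` having at least two elements, ordered by
inclusion. -/
def CIP {n : ℕ} (S : Finset (Finset (Fin n))) : Finset (Finset (Fin n)) :=
  S ∪ ((S.powerset.filter (fun P => P.Nonempty)).image (fun P => P.inf id)).filter
      (fun A => 2 ≤ A.card)

lemma inf_id_subset {n : ℕ} {P : Finset (Finset (Fin n))} {B : Finset (Fin n)} (h : B ∈ P) :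
    P.inf id ⊆ B :=
  Finset.le_iff_subset.mp (show P.inf id ≤ B from Finset.inf_le h)

/-- Inf of a nonempty subfamily of a laminar family with nonempty inf is in the family. -/
lemma lam_inf {n : ℕ} {F P : Finset (Finset (Fin n))}
    (hF : ∀ A ∈ F, ∀ B ∈ F, A ⊆ B ∨ B ⊆ A ∨ Disjoint A B)
    (hPF : P ⊆ F) (hP : P.Nonempty) (hne : (P.inf id).Nonempty) :
    P.inf id ∈ F := by
  obtain ⟨B, hB, hmin⟩ := P.exists_min_image Finset.card hP
  have hBle : ∀ C ∈ P, B ⊆ C := by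
    intro C hC
    have hd : ¬ Disjoint B C := by
      intro hd
      have h1 : P.inf id ⊆ B := inf_id_subset hB
      have h2 : P.inf id ⊆ C := inf_id_subset hC
      have := hd.mono h1 h2
      rw [disjoint_self, Finset.bot_eq_empty] at this
      exact hne.ne_empty this
    rcases hF B (hPF hB) C (hPF hC) with h | h | h
    · exact h
    · rw [Finset.eq_of_subset_of_card_le h (hmin C hC)]
    · exact absurd h hd
  have : P.inf id = B := Finset.Subset.antisymm (inf_id_subset hB) (Finset.le_inf hBle)
  rw [this]; exact hPF hB

lemma decomp {n : ℕ} {F₁ F₂ : Finset (Finset (Fin n))}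
    (h₁ : IsCladeFamily F₁) (h₂ : IsCladeFamily F₂)
    {K : Finset (Fin n)} (hK : K ∈ CIP (F₁ ∪ F₂)) (hne : K.Nonempty) :
    ∃ B ∈ F₁, ∃ C ∈ F₂, K = B ∩ C := by
  rw [CIP, Finset.mem_union] at hK
  rcases hK with hK | hK
  · rw [Finset.mem_union] at hK
    rcases hK with hK | hK
    · exact ⟨K, hK, Finset.univ, h₂.1, by simp⟩
    · exact ⟨Finset.univ, h₁.1, K, hK, by simp⟩
  · rw [Finset.mem_filter, Finset.mem_image] at hK
    obtain ⟨⟨P, hP, hPK⟩, _⟩ := hK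
    rw [Finset.mem_filter, Finset.mem_powerset] at hP
    obtain ⟨hPS, _⟩ := hP
    set P₁ := P.filter (· ∈ F₁) with hP₁
    set P₂ := P.filter (· ∈ F₂) with hP₂
    have hPu : P = P₁ ∪ P₂ := by
      ext X
      simp only [hP₁, hP₂, Finset.mem_union, Finset.mem_filter]
      constructor
      · intro hX
        have := hPS hX
        rw [Finset.mem_union] at this
        tauto
      · tauto
    have hsplit : K = P₁.inf id ⊓ P₂.inf id := by
      rw [← hPK, hPu, Finset.inf_union]
    have hmem : ∀ (Q F : Finset (Finset (Fin n))), IsCladeFamily F → Q ⊆ F →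
        K ⊆ Q.inf id → Q.inf id ∈ F := by
      intro Q F hF hQF hKQ
      rcases Q.eq_empty_or_nonempty with rfl | hQ
      · simpa using hF.1
      · exact lam_inf hF.2.2 hQF hQ (hne.mono hKQ)
    have hsub₁ : P₁ ⊆ F₁ := fun X hX => (Finset.mem_filter.mp hX).2
    have hsub₂ : P₂ ⊆ F₂ := fun X hX => (Finset.mem_filter.mp hX).2
    have hK₁ : K ⊆ P₁.inf id := by
      rw [hsplit, Finset.inf_eq_inter]; exact Finset.inter_subset_left
    have hK₂ : K ⊆ P₂.inf id := by
      rw [hsplit, Finset.inf_eq_inter]; exact Finset.inter_subset_right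
    exact ⟨P₁.inf id, hmem P₁ F₁ h₁ hsub₁ hK₁, P₂.inf id, hmem P₂ F₂ h₂ hsub₂ hK₂,
      by simpa using hsplit⟩

/-- For `S = clade(T₁) ∪ clade(T₂)`: every element of `CIP(S) \ S` is the intersection of
exactly two elements of `S`, and `CIP(S)` is a join-semilattice: any two of its elements
have a least upper bound in `CIP(S)`. -/
theorem cip_intersections_and_join {n : ℕ} (F₁ F₂ : Finset (Finset (Fin n)))
    (h₁ : IsCladeFamily F₁) (h₂ : IsCladeFamily F₂) :
    (∀ A ∈ CIP (F₁ ∪ F₂), A ∉ F₁ ∪ F₂ →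
      ∃ B ∈ F₁ ∪ F₂, ∃ C ∈ F₁ ∪ F₂, B ≠ C ∧ A = B ∩ C) ∧
    (∀ A ∈ CIP (F₁ ∪ F₂), ∀ B ∈ CIP (F₁ ∪ F₂),
      ∃ J ∈ CIP (F₁ ∪ F₂), A ⊆ J ∧ B ⊆ J ∧
        ∀ K ∈ CIP (F₁ ∪ F₂), A ⊆ K → B ⊆ K → J ⊆ K) := by
  have hSsub : F₁ ∪ F₂ ⊆ CIP (F₁ ∪ F₂) := Finset.subset_union_left
  constructor
  · intro A hA hAS
    have hcard : 2 ≤ A.card := by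
      rw [CIP, Finset.mem_union] at hA
      rcases hA with hA | hA
      · exact absurd hA hAS
      · exact (Finset.mem_filter.mp hA).2
    have hne : A.Nonempty := Finset.card_pos.mp (by omega)
    obtain ⟨B, hB, C, hC, hBC⟩ := decomp h₁ h₂ hA hne
    refine ⟨B, Finset.mem_union_left _ hB, C, Finset.mem_union_right _ hC, ?_, hBC⟩
    rintro rfl
    rw [Finset.inter_self] at hBC
    exact hAS (hBC ▸ Finset.mem_union_left _ hB)
  · intro A hA B hB
    set T := (CIP (F₁ ∪ F₂)).filter (fun K => A ⊆ K ∧ B ⊆ K) with hT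
    have hunivT : Finset.univ ∈ T := by
      rw [hT, Finset.mem_filter]
      refine ⟨hSsub (Finset.mem_union_left _ h₁.1), Finset.subset_univ _, Finset.subset_univ _⟩
    set J := T.inf id with hJ
    have hAJ : A ⊆ J := Finset.le_inf fun K hK => (Finset.mem_filter.mp hK).2.1
    have hBJ : B ⊆ J := Finset.le_inf fun K hK => (Finset.mem_filter.mp hK).2.2
    have hJK : ∀ K ∈ CIP (F₁ ∪ F₂), A ⊆ K → B ⊆ K → J ⊆ K := by
      intro K hK hAK hBK
      exact inf_id_subset (Finset.mem_filter.mpr ⟨hK, hAK, hBK⟩)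
    refine ⟨J, ?_, hAJ, hBJ, hJK⟩
    rcases J.eq_empty_or_nonempty with hJe | hJne
    · -- J = ∅, so A = ∅ and A ∈ CIP, hence ∅ ∈ CIP
      have hAe : A = ∅ := Finset.subset_empty.mp (hJe ▸ hAJ)
      rw [hJe, ← hAe]; exact hA
    · -- J nonempty: J = inf of Q = all members of S containing J
      set Q := (F₁ ∪ F₂).filter (fun X => J ⊆ X) with hQ
      have hQJ : Q.inf id = J := by
        apply le_antisymm
        · apply Finset.le_inf
          intro K hK
          rw [hT, Finset.mem_filter] at hK
          obtain ⟨hKcip, hAK, hBK⟩ := hK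
          have hJKsub : J ⊆ K := hJK K hKcip hAK hBK
          have hKne : K.Nonempty := hJne.mono hJKsub
          obtain ⟨B', hB', C', hC', hKeq⟩ := decomp h₁ h₂ hKcip hKne
          have hB'Q : B' ∈ Q := Finset.mem_filter.mpr
            ⟨Finset.mem_union_left _ hB', hJKsub.trans (hKeq ▸ Finset.inter_subset_left)⟩
          have hC'Q : C' ∈ Q := Finset.mem_filter.mpr
            ⟨Finset.mem_union_right _ hC', hJKsub.trans (hKeq ▸ Finset.inter_subset_right)⟩
          have hqb : Q.inf id ⊆ B' := inf_id_subset hB'Q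
          have hqc : Q.inf id ⊆ C' := inf_id_subset hC'Q
          have : Q.inf id ⊆ B' ∩ C' := Finset.subset_inter hqb hqc
          exact hKeq ▸ this
        · exact Finset.le_inf fun X hX => (Finset.mem_filter.mp hX).2
      rcases lt_or_ge J.card 2 with hc | hc
      · -- J is a singleton (it's nonempty with card < 2)
        have : J.card = 1 := by
          have := Finset.card_pos.mpr hJne; omega
        obtain ⟨i, hi⟩ := Finset.card_eq_one.mp this
        rw [hi]
        exact hSsub (Finset.mem_union_left _ (h₁.2.1 i))
      · -- J has ≥ 2 elements, in CIP via the image part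
        rw [CIP, Finset.mem_union]
        right
        rw [Finset.mem_filter]
        refine ⟨Finset.mem_image.mpr ⟨Q, ?_, hQJ⟩, hc⟩
        rw [Finset.mem_filter, Finset.mem_powerset]
        exact ⟨Finset.filter_subset _ _,
          ⟨Finset.univ, Finset.mem_filter.mpr
            ⟨Finset.mem_union_left _ h₁.1, Finset.subset_univ _⟩⟩⟩
end

section
/- Let S = clade(T₁) ∪ clade(T₂) for rooted trees T₁, T₂ on leaf set [n], let CIP(S) be its clade intersection poset, and let C ⊆ [n] with |C| ≥ 2. If D is the minimal element of CIP(S) containing C, then there exist i, j ∈ C such that D is the minimal element of CIP(S) containing {i,j}. -/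
lemma exists_min_clade {n : ℕ} {F : Finset (Finset (Fin n))} (hF : IsCladeFamily F)
    (X : Finset (Fin n)) (hX : X.Nonempty) :
    ∃ M ∈ F, X ⊆ M ∧ ∀ B ∈ F, X ⊆ B → M ⊆ B := by
  have hT : (F.filter (fun B => X ⊆ B)).Nonempty :=
    ⟨Finset.univ, Finset.mem_filter.mpr ⟨hF.1, Finset.subset_univ X⟩⟩
  obtain ⟨M, hM, hmin⟩ := Finset.exists_min_image _ Finset.card hT
  rw [Finset.mem_filter] at hM
  refine ⟨M, hM.1, hM.2, fun B hB hXB => ?_⟩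
  obtain ⟨x, hx⟩ := hX
  rcases hF.2.2 M hM.1 B hB with h | h | h
  · exact h
  · exact (Finset.eq_of_subset_of_card_le h
      (hmin B (Finset.mem_filter.mpr ⟨hB, hXB⟩))).ge
  · exact absurd (Finset.disjoint_left.mp h (hM.2 hx) (hXB hx)) (fun c => c)

lemma exists_min_clade_pair {n : ℕ} {F : Finset (Finset (Fin n))} (hF : IsCladeFamily F)
    (i j : Fin n) :
    ∃ M ∈ F, i ∈ M ∧ j ∈ M ∧ ∀ B ∈ F, i ∈ B → j ∈ B → M ⊆ B := by
  obtain ⟨M, hMF, hsub, hmin⟩ := exists_min_clade hF {i, j} ⟨i, by simp⟩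
  refine ⟨M, hMF, hsub (by simp), hsub (by simp), fun B hB hiB hjB => ?_⟩
  exact hmin B hB (by simp [Finset.insert_subset_iff, hiB, hjB])

lemma clade_comp {n : ℕ} {F : Finset (Finset (Fin n))} (hF : IsCladeFamily F)
    {A B : Finset (Fin n)} (hA : A ∈ F) (hB : B ∈ F) {x : Fin n}
    (hxA : x ∈ A) (hxB : x ∈ B) : A ⊆ B ∨ B ⊆ A := by
  rcases hF.2.2 A hA B hB with h | h | h
  · exact Or.inl h
  · exact Or.inr h
  · exact absurd (Finset.disjoint_left.mp h hxA hxB) (fun c => c)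

/-- Stage 2: given a pair in `C` whose minimal `F₁`-clade is already the minimal
`F₁`-clade `A₁` of `C`, improve it to a pair also realizing `A₂` in `F₂`. -/
lemma stage2 {n : ℕ} {F₁ F₂ : Finset (Finset (Fin n))}
    (h₁ : IsCladeFamily F₁) (h₂ : IsCladeFamily F₂)
    {C A₁ A₂ : Finset (Fin n)}
    (hA₁ : A₁ ∈ F₁) (hCA₁ : C ⊆ A₁)
    (hA₂ : A₂ ∈ F₂) (hCA₂ : C ⊆ A₂) (hA₂min : ∀ B ∈ F₂, C ⊆ B → A₂ ⊆ B) :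
    ∀ k : ℕ, ∀ i j : Fin n, i ∈ C → j ∈ C → i ≠ j →
      ∀ M₂ ∈ F₂, i ∈ M₂ → j ∈ M₂ → (∀ B ∈ F₂, i ∈ B → j ∈ B → M₂ ⊆ B) →
      (∀ B ∈ F₁, i ∈ B → j ∈ B → A₁ ⊆ B) →
      A₂.card - M₂.card ≤ k →
      ∃ i' ∈ C, ∃ j' ∈ C, i' ≠ j' ∧ (∀ B ∈ F₁, i' ∈ B → j' ∈ B → A₁ ⊆ B) ∧
        (∀ B ∈ F₂, i' ∈ B → j' ∈ B → A₂ ⊆ B) := by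
  intro k
  induction k with
  | zero =>
    intro i j hi hj hij M₂ hM₂F hiM₂ hjM₂ hM₂min hP1 hk
    -- M₂ and A₂ are comparable, and card forces A₂ ⊆ M₂
    have hcomp := clade_comp h₂ hM₂F hA₂ hiM₂ (hCA₂ hi)
    have hA₂M₂ : A₂ ⊆ M₂ := by
      rcases hcomp with h | h
      · exact (Finset.eq_of_subset_of_card_le h (by omega)).ge
      · exact h
    exact ⟨i, hi, j, hj, hij, hP1, fun B hB hiB hjB => hA₂M₂.trans (hM₂min B hB hiB hjB)⟩
  | succ k ih =>
    intro i j hi hj hij M₂ hM₂F hiM₂ hjM₂ hM₂min hP1 hk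
    by_cases hsub : A₂ ⊆ M₂
    · exact ⟨i, hi, j, hj, hij, hP1, fun B hB hiB hjB => hsub.trans (hM₂min B hB hiB hjB)⟩
    have hM₂A₂ : M₂ ⊆ A₂ := by
      rcases clade_comp h₂ hM₂F hA₂ hiM₂ (hCA₂ hi) with h | h
      · exact h
      · exact absurd h hsub
    have hM₂lt : M₂.card < A₂.card :=
      Finset.card_lt_card (Finset.ssubset_iff_subset_ne.mpr
        ⟨hM₂A₂, fun e => hsub (e ▸ subset_rfl)⟩)
    -- pick m ∈ C outside M₂
    have hm : ∃ m ∈ C, m ∉ M₂ := by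
      by_contra h
      push_neg at h
      exact hsub (hA₂min M₂ hM₂F h)
    obtain ⟨m, hmC, hmM₂⟩ := hm
    have him : i ≠ m := fun e => hmM₂ (e ▸ hiM₂)
    have hjm : j ≠ m := fun e => hmM₂ (e ▸ hjM₂)
    -- minimal F₁-clade of {j, m}
    obtain ⟨M₁', hM₁'F, hjM₁', hmM₁', hM₁'min⟩ := exists_min_clade_pair h₁ j m
    by_cases hA₁M₁' : A₁ ⊆ M₁'
    · -- recurse with the pair (j, m)
      obtain ⟨M₂', hM₂'F, hjM₂', hmM₂', hM₂'min⟩ := exists_min_clade_pair h₂ j m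
      have hM₂M₂' : M₂ ⊆ M₂' := by
        rcases clade_comp h₂ hM₂'F hM₂F hjM₂' hjM₂ with h | h
        · exact absurd (h hmM₂') hmM₂
        · exact h
      have hcard : M₂.card < M₂'.card :=
        Finset.card_lt_card (Finset.ssubset_iff_subset_ne.mpr
          ⟨hM₂M₂', fun e => hmM₂ (e ▸ hmM₂')⟩)
      exact ih j m hj hmC hjm M₂' hM₂'F hjM₂' hmM₂' hM₂'min
        (fun B hB hjB hmB => hA₁M₁'.trans (hM₁'min B hB hjB hmB)) (by omega)
    · -- then i ∉ M₁', and the pair (i, m) works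
      have hiM₁' : i ∉ M₁' := fun h => hA₁M₁' (hP1 M₁' hM₁'F h hjM₁')
      obtain ⟨M₁'', hM₁''F, hiM₁'', hmM₁'', hM₁''min⟩ := exists_min_clade_pair h₁ i m
      have hM₁'M₁'' : M₁' ⊆ M₁'' := by
        rcases clade_comp h₁ hM₁''F hM₁'F hmM₁'' hmM₁' with h | h
        · exact absurd (h hiM₁'') hiM₁'
        · exact h
      have hjM₁'' : j ∈ M₁'' := hM₁'M₁'' hjM₁'
      obtain ⟨M₂'', hM₂''F, hiM₂'', hmM₂'', hM₂''min⟩ := exists_min_clade_pair h₂ i m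
      have hM₂M₂'' : M₂ ⊆ M₂'' := by
        rcases clade_comp h₂ hM₂''F hM₂F hiM₂'' hiM₂ with h | h
        · exact absurd (h hmM₂'') hmM₂
        · exact h
      have hcard : M₂.card < M₂''.card :=
        Finset.card_lt_card (Finset.ssubset_iff_subset_ne.mpr
          ⟨hM₂M₂'', fun e => hmM₂ (e ▸ hmM₂'')⟩)
      exact ih i m hi hmC him M₂'' hM₂''F hiM₂'' hmM₂'' hM₂''min
        (fun B hB hiB hmB => hP1 B hB hiB (hM₁''min B hB hiB hmB hjM₁'')) (by omega)

/-- Stage 1: improve an arbitrary pair in `C` to one realizing `A₁` in `F₁`,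
then finish with stage 2. -/
lemma stage1 {n : ℕ} {F₁ F₂ : Finset (Finset (Fin n))}
    (h₁ : IsCladeFamily F₁) (h₂ : IsCladeFamily F₂)
    {C A₁ A₂ : Finset (Fin n)}
    (hA₁ : A₁ ∈ F₁) (hCA₁ : C ⊆ A₁) (hA₁min : ∀ B ∈ F₁, C ⊆ B → A₁ ⊆ B)
    (hA₂ : A₂ ∈ F₂) (hCA₂ : C ⊆ A₂) (hA₂min : ∀ B ∈ F₂, C ⊆ B → A₂ ⊆ B) :
    ∀ k : ℕ, ∀ i j : Fin n, i ∈ C → j ∈ C → i ≠ j →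
      ∀ M₁ ∈ F₁, i ∈ M₁ → j ∈ M₁ → (∀ B ∈ F₁, i ∈ B → j ∈ B → M₁ ⊆ B) →
      A₁.card - M₁.card ≤ k →
      ∃ i' ∈ C, ∃ j' ∈ C, i' ≠ j' ∧ (∀ B ∈ F₁, i' ∈ B → j' ∈ B → A₁ ⊆ B) ∧
        (∀ B ∈ F₂, i' ∈ B → j' ∈ B → A₂ ⊆ B) := by
  intro k
  induction k with
  | zero =>
    intro i j hi hj hij M₁ hM₁F hiM₁ hjM₁ hM₁min hk
    have hA₁M₁ : A₁ ⊆ M₁ := by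
      rcases clade_comp h₁ hM₁F hA₁ hiM₁ (hCA₁ hi) with h | h
      · exact (Finset.eq_of_subset_of_card_le h (by omega)).ge
      · exact h
    obtain ⟨M₂, hM₂F, hiM₂, hjM₂, hM₂min⟩ := exists_min_clade_pair h₂ i j
    exact stage2 h₁ h₂ hA₁ hCA₁ hA₂ hCA₂ hA₂min A₂.card i j hi hj hij M₂ hM₂F hiM₂ hjM₂
      hM₂min (fun B hB hiB hjB => hA₁M₁.trans (hM₁min B hB hiB hjB)) (by omega)
  | succ k ih =>
    intro i j hi hj hij M₁ hM₁F hiM₁ hjM₁ hM₁min hk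
    by_cases hsub : A₁ ⊆ M₁
    · obtain ⟨M₂, hM₂F, hiM₂, hjM₂, hM₂min⟩ := exists_min_clade_pair h₂ i j
      exact stage2 h₁ h₂ hA₁ hCA₁ hA₂ hCA₂ hA₂min A₂.card i j hi hj hij M₂ hM₂F hiM₂ hjM₂
        hM₂min (fun B hB hiB hjB => hsub.trans (hM₁min B hB hiB hjB)) (by omega)
    have hM₁A₁ : M₁ ⊆ A₁ := by
      rcases clade_comp h₁ hM₁F hA₁ hiM₁ (hCA₁ hi) with h | h
      · exact h
      · exact absurd h hsub
    have hM₁lt : M₁.card < A₁.card :=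
      Finset.card_lt_card (Finset.ssubset_iff_subset_ne.mpr
        ⟨hM₁A₁, fun e => hsub (e ▸ subset_rfl)⟩)
    have hm : ∃ m ∈ C, m ∉ M₁ := by
      by_contra h
      push_neg at h
      exact hsub (hA₁min M₁ hM₁F h)
    obtain ⟨m, hmC, hmM₁⟩ := hm
    have him : i ≠ m := fun e => hmM₁ (e ▸ hiM₁)
    obtain ⟨M₁'', hM₁''F, hiM₁'', hmM₁'', hM₁''min⟩ := exists_min_clade_pair h₁ i m
    have hM₁M₁'' : M₁ ⊆ M₁'' := by
      rcases clade_comp h₁ hM₁''F hM₁F hiM₁'' hiM₁ with h | h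
      · exact absurd (h hmM₁'') hmM₁
      · exact h
    have hcard : M₁.card < M₁''.card :=
      Finset.card_lt_card (Finset.ssubset_iff_subset_ne.mpr
        ⟨hM₁M₁'', fun e => hmM₁ (e ▸ hmM₁'')⟩)
    exact ih i m hi hmC him M₁'' hM₁''F hiM₁'' hmM₁'' hM₁''min (by omega)

/-- Let `S = clade(T₁) ∪ clade(T₂)` and let `C ⊆ [n]` with `|C| ≥ 2`. If `D` is the
minimal element of `CIP(S)` containing `C`, then there are `i, j ∈ C` such that `D` is
the minimal element of `CIP(S)` containing `{i, j}`. -/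
theorem cip_minimal_pair {n : ℕ} (F₁ F₂ : Finset (Finset (Fin n)))
    (h₁ : IsCladeFamily F₁) (h₂ : IsCladeFamily F₂)
    (C D : Finset (Fin n)) (hC : 2 ≤ C.card)
    (hD : D ∈ CIP (F₁ ∪ F₂)) (hCD : C ⊆ D)
    (hmin : ∀ D' ∈ CIP (F₁ ∪ F₂), C ⊆ D' → D ⊆ D') :
    ∃ i ∈ C, ∃ j ∈ C, i ≠ j ∧
      ∀ D' ∈ CIP (F₁ ∪ F₂), i ∈ D' → j ∈ D' → D ⊆ D' := by
  have hCne : C.Nonempty := Finset.card_pos.mp (by omega)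
  obtain ⟨A₁, hA₁, hCA₁, hA₁min⟩ := exists_min_clade h₁ C hCne
  obtain ⟨A₂, hA₂, hCA₂, hA₂min⟩ := exists_min_clade h₂ C hCne
  obtain ⟨i₀, hi₀, j₀, hj₀, hij₀⟩ := Finset.one_lt_card.mp (by omega : 1 < C.card)
  obtain ⟨M₁, hM₁F, hiM₁, hjM₁, hM₁min⟩ := exists_min_clade_pair h₁ i₀ j₀
  obtain ⟨i, hi, j, hj, hij, hP1, hP2⟩ :=
    stage1 h₁ h₂ hA₁ hCA₁ hA₁min hA₂ hCA₂ hA₂min A₁.card i₀ j₀ hi₀ hj₀ hij₀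
      M₁ hM₁F hiM₁ hjM₁ hM₁min (by omega)
  -- A₁ ∩ A₂ is in the CIP
  have hIcip : A₁ ∩ A₂ ∈ CIP (F₁ ∪ F₂) := by
    apply Finset.mem_union_right
    rw [Finset.mem_filter]
    constructor
    · apply Finset.mem_image.mpr
      refine ⟨{A₁, A₂}, Finset.mem_filter.mpr ⟨Finset.mem_powerset.mpr ?_, ⟨A₁, by simp⟩⟩, ?_⟩
      · intro X hX
        rcases Finset.mem_insert.mp hX with h | h
        · exact h ▸ Finset.mem_union_left _ hA₁
        · exact (Finset.mem_singleton.mp h) ▸ Finset.mem_union_right _ hA₂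
      · simp [Finset.inf_insert, Finset.inf_eq_inter]
    · exact le_trans hC (Finset.card_le_card (Finset.subset_inter hCA₁ hCA₂))
  have hDsub : D ⊆ A₁ ∩ A₂ := hmin _ hIcip (Finset.subset_inter hCA₁ hCA₂)
  refine ⟨i, hi, j, hj, hij, fun D' hD' hiD' hjD' => hDsub.trans ?_⟩
  rcases Finset.mem_union.mp hD' with hD' | hD'
  · rcases Finset.mem_union.mp hD' with h | h
    · exact Finset.inter_subset_left.trans (hP1 D' h hiD' hjD')
    · exact Finset.inter_subset_right.trans (hP2 D' h hiD' hjD')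
  · obtain ⟨him, _⟩ := Finset.mem_filter.mp hD'
    obtain ⟨P, hP, hPinf⟩ := Finset.mem_image.mp him
    obtain ⟨hPsub, _⟩ := Finset.mem_filter.mp hP
    rw [Finset.mem_powerset] at hPsub
    rw [← hPinf]
    show A₁ ∩ A₂ ≤ P.inf id
    apply Finset.le_inf
    intro A hA
    have hD'A : D' ⊆ A := hPinf ▸ (Finset.inf_le hA : P.inf id ≤ id A)
    rcases Finset.mem_union.mp (hPsub hA) with h | h
    · exact Finset.inter_subset_left.trans (hP1 A h (hD'A hiD') (hD'A hjD'))
    · exact Finset.inter_subset_right.trans (hP2 A h (hD'A hiD') (hD'A hjD'))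
end

section
/- The cone K_T of all ultrametrics on [n] with topology a fixed rooted tree T is, modulo the lineality space spanned by the all-ones vector, generated by the vectors {−v_C : C a nontrivial clade of T}, where v_C is the 0/1 characteristic vector of the set of pairs contained in C. Concretely: every ultrametric δ with topology T can be written as δ = m·v_{[n]} − Σ_{C ∈ clade°(T)} t_C·v_C with all t_C ≥ 0 and m = max(δ), and conversely every such combination is an ultrametric with topology refined by T. -/
/-- An ultrametric, as a symmetric function on pairs. -/
def IsUltrametric {n : ℕ} (δ : Fin n → Fin n → ℝ) : Prop :=
  (∀ u v : Fin n, δ u v = δ v u) ∧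
  ∀ u v w : Fin n, u ≠ v → u ≠ w → v ≠ w → δ u v ≤ max (δ u w) (δ v w)

/-- The most recent common ancestor of `u` and `v` in the tree with clade family `F`:
the smallest clade containing both. -/
def mca {n : ℕ} (F : Finset (Finset (Fin n))) (u v : Fin n) : Finset (Fin n) :=
  (F.filter (fun A => u ∈ A ∧ v ∈ A)).inf id

/-- The characteristic vector `v_C` of the pairs inside `C`, evaluated at the pair `{u,v}`. -/
def charVec {n : ℕ} (C : Finset (Fin n)) (u v : Fin n) : ℝ :=
  if u ∈ C ∧ v ∈ C then 1 else 0

lemma aux_chain_inf_mem {n : ℕ} (G : Finset (Finset (Fin n))) (hne : G.Nonempty)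
    (hchain : ∀ A ∈ G, ∀ B ∈ G, A ⊆ B ∨ B ⊆ A) : G.inf id ∈ G := by
  obtain ⟨M, hM, hmin⟩ := Finset.exists_min_image G (fun A => A.card) hne
  have hMle : ∀ A ∈ G, M ≤ id A := by
    intro A hA
    rcases hchain A hA M hM with h | h
    · exact (Finset.eq_of_subset_of_card_le h (hmin A hA)).ge
    · exact h
  have : G.inf id = M := le_antisymm (Finset.inf_le hM) (Finset.le_inf hMle)
  rw [this]; exact hM

lemma mca_spec {n : ℕ} (F : Finset (Finset (Fin n))) (hF : IsCladeFamily F) (u v : Fin n) :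
    mca F u v ∈ F ∧ u ∈ mca F u v ∧ v ∈ mca F u v := by
  have h : mca F u v ∈ F.filter (fun A => u ∈ A ∧ v ∈ A) := by
    apply aux_chain_inf_mem
    · exact ⟨Finset.univ, by simp [hF.1]⟩
    · intro A hA B hB
      simp only [Finset.mem_filter] at hA hB
      rcases hF.2.2 A hA.1 B hB.1 with h | h | h
      · exact Or.inl h
      · exact Or.inr h
      · exact absurd hB.2.1 (Finset.disjoint_left.1 h hA.2.1)
  simpa using Finset.mem_filter.1 h

lemma mca_le {n : ℕ} (F : Finset (Finset (Fin n))) {C : Finset (Fin n)} {u v : Fin n}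
    (hC : C ∈ F) (hu : u ∈ C) (hv : v ∈ C) : mca F u v ⊆ C := by
  unfold mca
  exact Finset.le_iff_subset.1 (Finset.inf_le (Finset.mem_filter.2 ⟨hC, hu, hv⟩))

lemma charVec_eq_mca {n : ℕ} (F : Finset (Finset (Fin n))) (hF : IsCladeFamily F)
    {C : Finset (Fin n)} (hC : C ∈ F) (u v : Fin n) :
    charVec C u v = if mca F u v ⊆ C then 1 else 0 := by
  unfold charVec
  obtain ⟨_, hu, hv⟩ := mca_spec F hF u v
  refine if_congr ⟨fun h => mca_le F hC h.1 h.2, fun h => ⟨h hu, h hv⟩⟩ rfl rfl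

/-- The cone of ultrametrics with topology a fixed tree `T` (clade family `F`) is, modulo
the all-ones lineality space, generated by `{-v_C : C ∈ clade°(T)}`.  Forward direction:
every ultrametric with topology `T`, given by weights `w` on clades weakly increasing
toward the root (so its value on the pair `{u,v}` is `w (mca u v)` and its maximum is
`w [n]`), can be written as `w([n])·𝟙 − ∑_{C ∈ clade°(T)} t_C·v_C` with all `t_C ≥ 0`.
Converse: every such nonnegative combination is an ultrametric whose value on a pair
depends only on the most recent common ancestor of the pair in `T` (i.e. its topology is
refined by `T`). -/
theorem ultrametric_cone_generators {n : ℕ} (F : Finset (Finset (Fin n)))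
    (hF : IsCladeFamily F) :
    (∀ w : Finset (Fin n) → ℝ,
      (∀ A ∈ F, ∀ B ∈ F, A ⊆ B → w A ≤ w B) →
      ∃ t : Finset (Fin n) → ℝ, (∀ C, 0 ≤ t C) ∧
        ∀ u v : Fin n, u ≠ v →
          w (mca F u v) = w Finset.univ -
            ∑ C ∈ F.filter (fun A => A ≠ Finset.univ), t C * charVec C u v) ∧
    (∀ m : ℝ, ∀ t : Finset (Fin n) → ℝ, (∀ C, 0 ≤ t C) →
      IsUltrametric (fun u v =>
        m - ∑ C ∈ F.filter (fun A => A ≠ Finset.univ), t C * charVec C u v) ∧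
      ∀ u v u' v' : Fin n, u ≠ v → u' ≠ v' → mca F u v = mca F u' v' →
        (m - ∑ C ∈ F.filter (fun A => A ≠ Finset.univ), t C * charVec C u v) =
          (m - ∑ C ∈ F.filter (fun A => A ≠ Finset.univ), t C * charVec C u' v')) := by
  constructor
  · -- forward direction
    intro w hw
    set par : Finset (Fin n) → Finset (Fin n) :=
      fun C => (F.filter (fun B => C ⊂ B)).inf id with hpardef
    have par_spec : ∀ C ∈ F, C ≠ Finset.univ → C.Nonempty →
        par C ∈ F ∧ C ⊂ par C ∧ ∀ B ∈ F, C ⊂ B → par C ⊆ B := by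
      intro C hC hCne hCnonempty
      have hmem : par C ∈ F.filter (fun B => C ⊂ B) := by
        apply aux_chain_inf_mem
        · exact ⟨Finset.univ, Finset.mem_filter.2 ⟨hF.1, Finset.ssubset_univ_iff.2 hCne⟩⟩
        · intro A hA B hB
          simp only [Finset.mem_filter] at hA hB
          rcases hF.2.2 A hA.1 B hB.1 with h | h | h
          · exact Or.inl h
          · exact Or.inr h
          · obtain ⟨x, hx⟩ := hCnonempty
            exact absurd (Finset.disjoint_left.1 h (hA.2.subset hx)) (by simp [hB.2.subset hx])
      simp only [Finset.mem_filter] at hmem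
      exact ⟨hmem.1, hmem.2, fun B hB hCB =>
        Finset.le_iff_subset.1 (Finset.inf_le (f := id) (Finset.mem_filter.2 ⟨hB, hCB⟩))⟩
    refine ⟨fun C => if h : C ∈ F ∧ C ≠ Finset.univ ∧ C ≠ ∅ then w (par C) - w C else 0,
      ?_, ?_⟩
    · intro C
      dsimp only
      split_ifs with h
      · obtain ⟨hC, hCne, hCe⟩ := h
        obtain ⟨h1, h2, _⟩ := par_spec C hC hCne (Finset.nonempty_iff_ne_empty.2 hCe)
        exact sub_nonneg.2 (hw C hC (par C) h1 h2.subset)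
      · exact le_refl 0
    · intro u v huv
      set G := F.filter (fun A => u ∈ A ∧ v ∈ A) with hGdef
      have huniv_mem : Finset.univ ∈ G := Finset.mem_filter.2 ⟨hF.1, by simp⟩
      obtain ⟨hmcaF, humca, hvmca⟩ := mca_spec F hF u v
      have hmca_mem : mca F u v ∈ G := Finset.mem_filter.2 ⟨hmcaF, humca, hvmca⟩
      set S := F.filter (fun A => (A ≠ Finset.univ) ∧ u ∈ A ∧ v ∈ A) with hSdef
      set S' := F.filter (fun A => (u ∈ A ∧ v ∈ A) ∧ A ≠ mca F u v) with hS'def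
      have hsum1 : ∑ C ∈ F.filter (fun A => A ≠ Finset.univ),
          (if h : C ∈ F ∧ C ≠ Finset.univ ∧ C ≠ ∅ then w (par C) - w C else 0) * charVec C u v
          = ∑ C ∈ S, (w (par C) - w C) := by
        rw [show S = (F.filter (fun A => A ≠ Finset.univ)).filter (fun A => u ∈ A ∧ v ∈ A) by
          rw [Finset.filter_filter]]
        conv_rhs => rw [Finset.sum_filter]
        apply Finset.sum_congr rfl
        intro C hC
        simp only [Finset.mem_filter] at hC
        unfold charVec
        by_cases h : u ∈ C ∧ v ∈ C
        · have hne : C ≠ ∅ := Finset.nonempty_iff_ne_empty.1 ⟨u, h.1⟩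
          rw [if_pos h, if_pos h, mul_one, dif_pos ⟨hC.1, hC.2, hne⟩]
        · rw [if_neg h, if_neg h, mul_zero]
      rw [hsum1, Finset.sum_sub_distrib]
      have hbij : ∑ C ∈ S, w (par C) = ∑ D ∈ S', w D := by
        apply Finset.sum_bij (fun C _ => par C)
        · intro C hC
          simp only [hSdef, Finset.mem_filter] at hC
          obtain ⟨hCF, hCne, hu, hv⟩ := hC
          obtain ⟨h1, h2, _⟩ := par_spec C hCF hCne ⟨u, hu⟩
          refine Finset.mem_filter.2 ⟨h1, ⟨h2.subset hu, h2.subset hv⟩, ?_⟩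
          exact (lt_of_le_of_lt (Finset.le_iff_subset.2 (mca_le F hCF hu hv)) h2).ne'
        · intro C1 hC1 C2 hC2 heq
          simp only [hSdef, Finset.mem_filter] at hC1 hC2
          obtain ⟨hC1F, hC1ne, hu1, hv1⟩ := hC1
          obtain ⟨hC2F, hC2ne, hu2, hv2⟩ := hC2
          obtain ⟨hp1F, hp1, hp1min⟩ := par_spec C1 hC1F hC1ne ⟨u, hu1⟩
          obtain ⟨hp2F, hp2, hp2min⟩ := par_spec C2 hC2F hC2ne ⟨u, hu2⟩
          have hcomp : C1 ⊆ C2 ∨ C2 ⊆ C1 := by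
            rcases hF.2.2 C1 hC1F C2 hC2F with h | h | h
            · exact Or.inl h
            · exact Or.inr h
            · exact absurd hu2 (Finset.disjoint_left.1 h hu1)
          rcases hcomp with h | h
          · rcases h.eq_or_ssubset with h | h
            · exact h
            · exact absurd (lt_of_le_of_lt (hp1min C2 hC2F h) (heq ▸ hp2)) (lt_irrefl _)
          · rcases h.eq_or_ssubset with h | h
            · exact h.symm
            · exact absurd (lt_of_le_of_lt (hp2min C1 hC1F h) (heq ▸ hp1)) (lt_irrefl _)
        · intro D hD
          simp only [hS'def, Finset.mem_filter] at hD
          obtain ⟨hDF, ⟨huD, hvD⟩, hDne⟩ := hD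
          have hmcaD : mca F u v ⊂ D :=
            lt_of_le_of_ne (Finset.le_iff_subset.2 (mca_le F hDF huD hvD)) (Ne.symm hDne)
          set K := F.filter (fun A => (u ∈ A ∧ v ∈ A) ∧ A ⊂ D) with hKdef
          have hKne : K.Nonempty := ⟨mca F u v, Finset.mem_filter.2 ⟨hmcaF, ⟨humca, hvmca⟩, hmcaD⟩⟩
          obtain ⟨C, hCK, hCmax⟩ := Finset.exists_max_image K (fun A => A.card) hKne
          simp only [hKdef, Finset.mem_filter] at hCK
          obtain ⟨hCF, ⟨huC, hvC⟩, hCD⟩ := hCK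
          have hCne : C ≠ Finset.univ := by
            intro h
            subst h
            exact (Finset.le_iff_subset.2 (Finset.subset_univ D)).not_gt hCD
          obtain ⟨hpF, hp, hpmin⟩ := par_spec C hCF hCne ⟨u, huC⟩
          have hpD : par C ⊆ D := hpmin D hDF hCD
          have hpeq : par C = D := by
            by_contra hne
            have hpss : par C ⊂ D := lt_of_le_of_ne (Finset.le_iff_subset.2 hpD) hne
            have : par C ∈ K := Finset.mem_filter.2 ⟨hpF, ⟨hp.subset huC, hp.subset hvC⟩, hpss⟩
            exact absurd (Finset.card_lt_card hp) (not_lt.2 (hCmax _ this))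
          exact ⟨C, Finset.mem_filter.2 ⟨hCF, hCne, huC, hvC⟩, hpeq⟩
        · intro C hC
          rfl
      rw [hbij]
      have hS'eq : S' = G.erase (mca F u v) := by
        ext A
        simp only [hS'def, hGdef, Finset.mem_filter, Finset.mem_erase]
        tauto
      have hSeq : S = G.erase Finset.univ := by
        ext A
        simp only [hSdef, hGdef, Finset.mem_filter, Finset.mem_erase]
        tauto
      rw [hS'eq, hSeq, Finset.sum_erase_eq_sub hmca_mem, Finset.sum_erase_eq_sub huniv_mem]
      ring
  · -- converse
    intro m t ht
    have hcomm : ∀ (C : Finset (Fin n)) (u v : Fin n), charVec C u v = charVec C v u := by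
      intro C u v
      unfold charVec
      exact if_congr and_comm rfl rfl
    have hsymm : ∀ u v : Fin n,
        (m - ∑ C ∈ F.filter (fun A => A ≠ Finset.univ), t C * charVec C u v) =
        (m - ∑ C ∈ F.filter (fun A => A ≠ Finset.univ), t C * charVec C v u) := by
      intro u v
      congr 1
      exact Finset.sum_congr rfl fun C _ => by rw [hcomm]
    have key : ∀ a b c : Fin n, mca F a c ⊆ mca F b c →
        (m - ∑ C ∈ F.filter (fun A => A ≠ Finset.univ), t C * charVec C a b) ≤
        (m - ∑ C ∈ F.filter (fun A => A ≠ Finset.univ), t C * charVec C b c) := by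
      intro a b c hsub
      apply sub_le_sub_left
      apply Finset.sum_le_sum
      intro C hC
      simp only [Finset.mem_filter] at hC
      apply mul_le_mul_of_nonneg_left _ (ht C)
      unfold charVec
      by_cases h : b ∈ C ∧ c ∈ C
      · have hmc : mca F b c ⊆ C := mca_le F hC.1 h.1 h.2
        have ha : a ∈ C := hmc (hsub ((mca_spec F hF a c).2.1))
        rw [if_pos h, if_pos ⟨ha, h.1⟩]
      · rw [if_neg h]
        split_ifs <;> norm_num
    constructor
    · constructor
      · exact hsymm
      · intro u v x huv hux hvx
        have hm1 := (mca_spec F hF u x)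
        have hm2 := (mca_spec F hF v x)
        have hcomp : mca F u x ⊆ mca F v x ∨ mca F v x ⊆ mca F u x := by
          rcases hF.2.2 _ hm1.1 _ hm2.1 with h | h | h
          · exact Or.inl h
          · exact Or.inr h
          · exact absurd hm2.2.2 (Finset.disjoint_left.1 h hm1.2.2)
        rcases hcomp with h | h
        · exact le_trans (key u v x h) (le_max_right _ _)
        · calc (m - ∑ C ∈ F.filter (fun A => A ≠ Finset.univ), t C * charVec C u v)
              = (m - ∑ C ∈ F.filter (fun A => A ≠ Finset.univ), t C * charVec C v u) :=
                hsymm u v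
            _ ≤ (m - ∑ C ∈ F.filter (fun A => A ≠ Finset.univ), t C * charVec C u x) :=
                key v u x h
            _ ≤ _ := le_max_left _ _
    · intro u v u' v' _ _ hmca
      congr 1
      apply Finset.sum_congr rfl
      intro C hC
      simp only [Finset.mem_filter] at hC
      rw [charVec_eq_mca F hF hC.1, charVec_eq_mca F hF hC.1, hmca]
end

section
/- For rooted trees T₁, T₂ on leaf set [n], the rank of the graphic matroid of the clade graph G_{T₁,T₂} (number of vertices minus number of connected components) equals |clade(T₁) ∪ clade(T₂)|. Equivalently, the number of connected components of G_{T₁,T₂} equals |clade(T₁) ∩ clade(T₂)|. -/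
/-- The (non-singleton) clades of a tree: the sets of leaves below internal vertices. -/
def nsClades {n : ℕ} (F : Finset (Finset (Fin n))) : Finset (Finset (Fin n)) :=
  F.filter (fun A => 2 ≤ A.card)

/-- The vertex set of the clade graph: the disjoint union of the clades of the two trees. -/
def CladeVert {n : ℕ} (F₁ F₂ : Finset (Finset (Fin n))) : Type :=
  {A // A ∈ nsClades F₁} ⊕ {A // A ∈ nsClades F₂}

/-- The clade graph `G_{T₁,T₂}` (with parallel edges collapsed): `A` on the `T₁` side is
adjacent to `B` on the `T₂` side iff some pair `{i,j}` has `A` as its minimal `T₁`-clade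
and `B` as its minimal `T₂`-clade. -/
def cladeGraph {n : ℕ} (F₁ F₂ : Finset (Finset (Fin n))) : SimpleGraph (CladeVert F₁ F₂) :=
  SimpleGraph.fromRel (fun x y => ∃ i j : Fin n, i ≠ j ∧
    ∃ (hA : mca F₁ i j ∈ nsClades F₁) (hB : mca F₂ i j ∈ nsClades F₂),
      x = Sum.inl ⟨mca F₁ i j, hA⟩ ∧ y = Sum.inr ⟨mca F₂ i j, hB⟩)

namespace CladeAux

open Finset

variable {n : ℕ}

lemma inf_mem_of_chain (S : Finset (Finset (Fin n))) (hne : S.Nonempty)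
    (hch : ∀ a ∈ S, ∀ b ∈ S, a ⊆ b ∨ b ⊆ a) : S.inf id ∈ S := by
  obtain ⟨m, hm, hmin⟩ := S.exists_minimal hne
  have hbot : ∀ a ∈ S, m ≤ a := by
    intro a ha
    rcases hch m hm a ha with h | h
    · exact h
    · rcases (Finset.le_iff_subset.mpr h).lt_or_eq with h' | h'
      · exact (lt_irrefl a (h'.trans_le (hmin ha h'.le))).elim
      · exact le_of_eq h'.symm
  have : S.inf id = m := le_antisymm (Finset.inf_le hm) (Finset.le_inf hbot)
  rw [this]; exact hm

lemma sup_mem_of_chain (S : Finset (Finset (Fin n))) (hne : S.Nonempty)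
    (hch : ∀ a ∈ S, ∀ b ∈ S, a ⊆ b ∨ b ⊆ a) : S.sup id ∈ S := by
  obtain ⟨m, hm, hmax⟩ := S.exists_maximal hne
  have htop : ∀ a ∈ S, a ≤ m := by
    intro a ha
    rcases hch m hm a ha with h | h
    · rcases (Finset.le_iff_subset.mpr h).lt_or_eq with h' | h'
      · exact (lt_irrefl m (h'.trans_le (hmax ha h'.le))).elim
      · exact le_of_eq h'.symm
    · exact h
  have : S.sup id = m := le_antisymm (Finset.sup_le htop) (Finset.le_sup (f := id) hm)
  rw [this]; exact hm

lemma comp_of_mem {F : Finset (Finset (Fin n))} (hF : IsCladeFamily F)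
    {A B : Finset (Fin n)} (hA : A ∈ F) (hB : B ∈ F) {x : Fin n}
    (hxA : x ∈ A) (hxB : x ∈ B) : A ⊆ B ∨ B ⊆ A := by
  rcases hF.2.2 A hA B hB with h | h | h
  · exact Or.inl h
  · exact Or.inr h
  · exact absurd hxB (Finset.disjoint_left.mp h hxA)

lemma mca_mem_filter {F : Finset (Finset (Fin n))} (hF : IsCladeFamily F) (i j : Fin n) :
    mca F i j ∈ F.filter (fun A => i ∈ A ∧ j ∈ A) := by
  apply inf_mem_of_chain
  · exact ⟨Finset.univ, Finset.mem_filter.mpr ⟨hF.1, Finset.mem_univ i, Finset.mem_univ j⟩⟩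
  · intro a ha b hb
    rw [Finset.mem_filter] at ha hb
    exact comp_of_mem hF ha.1 hb.1 ha.2.1 hb.2.1

lemma mca_mem {F : Finset (Finset (Fin n))} (hF : IsCladeFamily F) (i j : Fin n) :
    mca F i j ∈ F := (Finset.mem_filter.mp (mca_mem_filter hF i j)).1

lemma mem_mca_left {F : Finset (Finset (Fin n))} (hF : IsCladeFamily F) (i j : Fin n) :
    i ∈ mca F i j := (Finset.mem_filter.mp (mca_mem_filter hF i j)).2.1

lemma mem_mca_right {F : Finset (Finset (Fin n))} (hF : IsCladeFamily F) (i j : Fin n) :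
    j ∈ mca F i j := (Finset.mem_filter.mp (mca_mem_filter hF i j)).2.2

lemma mca_le {F : Finset (Finset (Fin n))} (i j : Fin n) {D : Finset (Fin n)}
    (hD : D ∈ F) (hi : i ∈ D) (hj : j ∈ D) : mca F i j ⊆ D :=
  Finset.le_iff_subset.mp (Finset.inf_le (Finset.mem_filter.mpr ⟨hD, hi, hj⟩))

lemma mca_nsClades {F : Finset (Finset (Fin n))} (hF : IsCladeFamily F) {i j : Fin n}
    (hij : i ≠ j) : mca F i j ∈ nsClades F := by
  refine Finset.mem_filter.mpr ⟨mca_mem hF i j, ?_⟩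
  exact Finset.one_lt_card.mpr ⟨i, mem_mca_left hF i j, j, mem_mca_right hF i j, hij⟩

/-- The minimal common clade containing a set. -/
def mcs (F₁ F₂ : Finset (Finset (Fin n))) (A : Finset (Fin n)) : Finset (Fin n) :=
  ((F₁ ∩ F₂).filter (fun D => A ⊆ D)).inf id

variable {F₁ F₂ : Finset (Finset (Fin n))}

lemma subset_mcs (A : Finset (Fin n)) : A ⊆ mcs F₁ F₂ A :=
  Finset.le_iff_subset.mp
    (Finset.le_inf (fun D hD => Finset.le_iff_subset.mpr (Finset.mem_filter.mp hD).2))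

lemma mcs_le {A D : Finset (Fin n)} (hD₁ : D ∈ F₁) (hD₂ : D ∈ F₂) (hAD : A ⊆ D) :
    mcs F₁ F₂ A ⊆ D :=
  Finset.le_iff_subset.mp
    (Finset.inf_le (Finset.mem_filter.mpr ⟨Finset.mem_inter.mpr ⟨hD₁, hD₂⟩, hAD⟩))

lemma mcs_self {A : Finset (Fin n)} (hA₁ : A ∈ F₁) (hA₂ : A ∈ F₂) :
    mcs F₁ F₂ A = A :=
  le_antisymm (mcs_le hA₁ hA₂ (le_refl A)) (subset_mcs A)

lemma mcs_mem (h₁ : IsCladeFamily F₁) (h₂ : IsCladeFamily F₂) {A : Finset (Fin n)}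
    (hA : A.Nonempty) : mcs F₁ F₂ A ∈ F₁ ∧ mcs F₁ F₂ A ∈ F₂ := by
  obtain ⟨x, hx⟩ := hA
  have h : mcs F₁ F₂ A ∈ (F₁ ∩ F₂).filter (fun D => A ⊆ D) := by
    apply inf_mem_of_chain
    · exact ⟨Finset.univ, Finset.mem_filter.mpr ⟨Finset.mem_inter.mpr ⟨h₁.1, h₂.1⟩,
        Finset.subset_univ A⟩⟩
    · intro a ha b hb
      rw [Finset.mem_filter] at ha hb
      exact comp_of_mem h₁ (Finset.mem_inter.mp ha.1).1 (Finset.mem_inter.mp hb.1).1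
        (ha.2 hx) (hb.2 hx)
  have := (Finset.mem_filter.mp h).1
  exact ⟨(Finset.mem_inter.mp this).1, (Finset.mem_inter.mp this).2⟩

lemma mcs_mca (h₁ : IsCladeFamily F₁) (h₂ : IsCladeFamily F₂) (i j : Fin n) :
    mcs F₁ F₂ (mca F₁ i j) = mcs F₁ F₂ (mca F₂ i j) := by
  unfold mcs
  congr 1
  ext D
  simp only [Finset.mem_filter, Finset.mem_inter, and_congr_right_iff, and_imp]
  intro hD₁ hD₂
  constructor
  · intro h
    exact mca_le i j hD₂ (h (mem_mca_left h₁ i j)) (h (mem_mca_right h₁ i j))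
  · intro h
    exact mca_le i j hD₁ (h (mem_mca_left h₂ i j)) (h (mem_mca_right h₂ i j))

/-- The fiber map. -/
def phi (F₁ F₂ : Finset (Finset (Fin n))) : CladeVert F₁ F₂ → Finset (Fin n)
  | Sum.inl A => mcs F₁ F₂ A.1
  | Sum.inr B => mcs F₁ F₂ B.1

lemma phi_adj (h₁ : IsCladeFamily F₁) (h₂ : IsCladeFamily F₂) {u v : CladeVert F₁ F₂}
    (h : (cladeGraph F₁ F₂).Adj u v) : phi F₁ F₂ u = phi F₁ F₂ v := by
  rw [cladeGraph, SimpleGraph.fromRel_adj] at h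
  rcases h.2 with ⟨i, j, hij, hA, hB, rfl, rfl⟩ | ⟨i, j, hij, hA, hB, rfl, rfl⟩
  · exact mcs_mca h₁ h₂ i j
  · exact (mcs_mca h₁ h₂ i j).symm

lemma phi_reach (h₁ : IsCladeFamily F₁) (h₂ : IsCladeFamily F₂) {u v : CladeVert F₁ F₂}
    (h : (cladeGraph F₁ F₂).Reachable u v) : phi F₁ F₂ u = phi F₁ F₂ v := by
  obtain ⟨p⟩ := h
  induction p with
  | nil => rfl
  | cons hadj p ih => exact (phi_adj h₁ h₂ hadj).trans ih

lemma adj_pair {i j : Fin n} (hij : i ≠ j) (hA : mca F₁ i j ∈ nsClades F₁)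
    (hB : mca F₂ i j ∈ nsClades F₂) :
    (cladeGraph F₁ F₂).Adj (Sum.inl ⟨mca F₁ i j, hA⟩) (Sum.inr ⟨mca F₂ i j, hB⟩) := by
  refine (SimpleGraph.fromRel_adj ..).mpr ?_
  refine ⟨Sum.inl_ne_inr, Or.inl ⟨i, j, hij, hA, hB, rfl, rfl⟩⟩

/-- The key combinatorial step: if `A ∈ G` is not a clade of `H`, there is a pair `i,j`
whose minimal `G`-clade is `A` but whose minimal `H`-clade escapes `A`. -/
lemma step {G H : Finset (Finset (Fin n))} (hG : IsCladeFamily G) (hH : IsCladeFamily H)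
    {A : Finset (Fin n)} (hAG : A ∈ G) (hAne : A.Nonempty) (hAH : A ∉ H) :
    ∃ i j k, i ≠ j ∧ i ∈ A ∧ j ∈ A ∧ mca G i j = A ∧ k ∈ mca H i j ∧ k ∉ A := by
  by_contra hcon
  push_neg at hcon
  -- hcon : ∀ i j k, i ≠ j → i ∈ A → j ∈ A → mca G i j = A → k ∈ mca H i j → k ∈ A
  set E : Fin n → Finset (Fin n) := fun i => (H.filter (fun D => i ∈ D ∧ D ⊆ A)).sup id with hE
  have hEmem : ∀ i ∈ A, E i ∈ H ∧ i ∈ E i ∧ E i ⊆ A := by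
    intro i hi
    have h : E i ∈ H.filter (fun D => i ∈ D ∧ D ⊆ A) := by
      apply sup_mem_of_chain
      · exact ⟨{i}, Finset.mem_filter.mpr ⟨hH.2.1 i, Finset.mem_singleton_self i,
          Finset.singleton_subset_iff.mpr hi⟩⟩
      · intro a ha b hb
        rw [Finset.mem_filter] at ha hb
        exact comp_of_mem hH ha.1 hb.1 ha.2.1 hb.2.1
    rw [Finset.mem_filter] at h
    exact ⟨h.1, h.2.1, h.2.2⟩
  have hEmax : ∀ i, ∀ D ∈ H, i ∈ D → D ⊆ A → D ⊆ E i := by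
    intro i D hD hiD hDA
    exact Finset.le_iff_subset.mp
      (Finset.le_sup (f := id) (Finset.mem_filter.mpr ⟨hD, hiD, hDA⟩))
  have claim1 : ∀ i ∈ A, ∀ j ∈ A, mca G i j = A → E i = E j := by
    intro i hi j hj hm
    by_cases hij : i = j
    · rw [hij]
    · have hMA : mca H i j ⊆ A := fun k hk => hcon i j k hij hi hj hm hk
      have hjEi : j ∈ E i :=
        hEmax i _ (mca_mem hH i j) (mem_mca_left hH i j) hMA (mem_mca_right hH i j)
      have hiEj : i ∈ E j :=
        hEmax j _ (mca_mem hH i j) (mem_mca_right hH i j) hMA (mem_mca_left hH i j)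
      have h1 : E i ⊆ E j := hEmax j _ (hEmem i hi).1 hjEi (hEmem i hi).2.2
      have h2 : E j ⊆ E i := hEmax i _ (hEmem j hj).1 hiEj (hEmem j hj).2.2
      exact le_antisymm h1 h2
  have claim2 : ∀ m : ℕ, ∀ i ∈ A, ∀ j ∈ A, A.card ≤ (mca G i j).card + m → E i = E j := by
    intro m
    induction m with
    | zero =>
      intro i hi j hj hc
      have hsub : mca G i j ⊆ A := mca_le i j hAG hi hj
      exact claim1 i hi j hj (Finset.eq_of_subset_of_card_le hsub (by omega))
    | succ m ih =>
      intro i hi j hj hc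
      have hsub : mca G i j ⊆ A := mca_le i j hAG hi hj
      by_cases hm : mca G i j = A
      · exact claim1 i hi j hj hm
      · obtain ⟨k, hkA, hkm⟩ :=
          Finset.exists_of_ssubset (lt_of_le_of_ne (Finset.le_iff_subset.mpr hsub) hm)
        have hik : mca G i j ⊂ mca G i k := by
          rcases comp_of_mem hG (mca_mem hG i k) (mca_mem hG i j)
            (mem_mca_left hG i k) (mem_mca_left hG i j) with h | h
          · exact absurd (h (mem_mca_right hG i k)) hkm
          · exact (Finset.ssubset_iff_of_subset h).mpr ⟨k, mem_mca_right hG i k, hkm⟩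
        have hjk : mca G i j ⊂ mca G j k := by
          rcases comp_of_mem hG (mca_mem hG j k) (mca_mem hG i j)
            (mem_mca_left hG j k) (mem_mca_right hG i j) with h | h
          · exact absurd (h (mem_mca_right hG j k)) hkm
          · exact (Finset.ssubset_iff_of_subset h).mpr ⟨k, mem_mca_right hG j k, hkm⟩
        have h1 : E i = E k := ih i hi k hkA (by have := Finset.card_lt_card hik; omega)
        have h2 : E j = E k := ih j hj k hkA (by have := Finset.card_lt_card hjk; omega)
        rw [h1, h2]
  obtain ⟨i₀, hi₀⟩ := hAne
  have hall : ∀ i ∈ A, E i = E i₀ := fun i hi => claim2 A.card i hi i₀ hi₀ (by omega)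
  have hAE : A = E i₀ := by
    apply le_antisymm
    · intro i hi
      rw [← hall i hi]
      exact (hEmem i hi).2.1
    · exact (hEmem i₀ hi₀).2.2
  exact hAH (hAE ▸ (hEmem i₀ hi₀).1)

lemma exists_pair_mca {F : Finset (Finset (Fin n))} (hF : IsCladeFamily F)
    {C : Finset (Fin n)} (hC : C ∈ F) (h2 : 2 ≤ C.card) :
    ∃ i j, i ≠ j ∧ mca F i j = C := by
  obtain ⟨a, ha, b, hb, hab⟩ := Finset.one_lt_card.mp h2
  have hne : ((C ×ˢ C).filter (fun p => p.1 ≠ p.2)).Nonempty :=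
    ⟨(a, b), Finset.mem_filter.mpr ⟨Finset.mem_product.mpr ⟨ha, hb⟩, hab⟩⟩
  obtain ⟨⟨i, j⟩, hmem, hmax⟩ :=
    Finset.exists_max_image _ (fun p => (mca F p.1 p.2).card) hne
  rw [Finset.mem_filter, Finset.mem_product] at hmem
  obtain ⟨⟨hi, hj⟩, hij⟩ := hmem
  refine ⟨i, j, hij, ?_⟩
  have hsub : mca F i j ⊆ C := mca_le i j hC hi hj
  by_contra hm
  obtain ⟨k, hkC, hkm⟩ :=
    Finset.exists_of_ssubset (lt_of_le_of_ne (Finset.le_iff_subset.mpr hsub) hm)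
  have hik : mca F i j ⊂ mca F i k := by
    rcases comp_of_mem hF (mca_mem hF i k) (mca_mem hF i j)
      (mem_mca_left hF i k) (mem_mca_left hF i j) with h | h
    · exact absurd (h (mem_mca_right hF i k)) hkm
    · exact (Finset.ssubset_iff_of_subset h).mpr ⟨k, mem_mca_right hF i k, hkm⟩
  have hik' : i ≠ k := fun h => hkm (h ▸ mem_mca_left hF i j)
  have hm1 := hmax (i, k) (Finset.mem_filter.mpr ⟨Finset.mem_product.mpr ⟨hi, hkC⟩, hik'⟩)
  have hm2 := Finset.card_lt_card hik
  dsimp only at hm1 hmax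
  omega

lemma phi_mem (h₁ : IsCladeFamily F₁) (h₂ : IsCladeFamily F₂) (v : CladeVert F₁ F₂) :
    phi F₁ F₂ v ∈ nsClades F₁ ∧ phi F₁ F₂ v ∈ nsClades F₂ := by
  have key : ∀ A : Finset (Fin n), A ∈ nsClades F₁ ∨ A ∈ nsClades F₂ →
      mcs F₁ F₂ A ∈ nsClades F₁ ∧ mcs F₁ F₂ A ∈ nsClades F₂ := by
    intro A hA
    have h2 : 2 ≤ A.card := by
      rcases hA with h | h
      · exact (Finset.mem_filter.mp h).2
      · exact (Finset.mem_filter.mp h).2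
    have hne : A.Nonempty := Finset.card_pos.mp (by omega)
    obtain ⟨hm1, hm2⟩ := mcs_mem h₁ h₂ hne
    have hcard : 2 ≤ (mcs F₁ F₂ A).card :=
      le_trans h2 (Finset.card_le_card (subset_mcs A))
    exact ⟨Finset.mem_filter.mpr ⟨hm1, hcard⟩, Finset.mem_filter.mpr ⟨hm2, hcard⟩⟩
  cases v with
  | inl A => exact key A.1 (Or.inl A.2)
  | inr B => exact key B.1 (Or.inr B.2)

lemma climb_l (h₁ : IsCladeFamily F₁) (h₂ : IsCladeFamily F₂) {C : Finset (Fin n)}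
    (hC₁ : C ∈ nsClades F₁) :
    ∀ (m : ℕ) (A : Finset (Fin n)) (hA : A ∈ nsClades F₁),
      mcs F₁ F₂ A = C → n ≤ A.card + m →
      (cladeGraph F₁ F₂).Reachable (Sum.inl ⟨A, hA⟩) (Sum.inl ⟨C, hC₁⟩) := by
  have top : ∀ (A : Finset (Fin n)) (hA : A ∈ nsClades F₁), A ∈ F₂ → mcs F₁ F₂ A = C →
      (cladeGraph F₁ F₂).Reachable (Sum.inl ⟨A, hA⟩) (Sum.inl ⟨C, hC₁⟩) := by
    intro A hA hAF₂ hfib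
    have hAC : A = C := by
      rw [← hfib, mcs_self (Finset.mem_filter.mp hA).1 hAF₂]
    subst hAC
    exact SimpleGraph.Reachable.refl _
  intro m
  induction m with
  | zero =>
    intro A hA hfib hcard
    have hle : A.card ≤ n := le_trans (Finset.card_le_univ A) (by simp)
    have hAuniv : A = Finset.univ := Finset.eq_univ_of_card A (by simp; omega)
    exact top A hA (hAuniv ▸ h₂.1) hfib
  | succ m ih =>
    intro A hA hfib hcard
    by_cases hAF₂ : A ∈ F₂
    · exact top A hA hAF₂ hfib
    · have hAF₁ : A ∈ F₁ := (Finset.mem_filter.mp hA).1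
      have hAne : A.Nonempty := Finset.card_pos.mp (by
        have := (Finset.mem_filter.mp hA).2; omega)
      obtain ⟨i, j, k, hij, hiA, hjA, hmG, hkM, hkA⟩ := step h₁ h₂ hAF₁ hAne hAF₂
      have hik : i ≠ k := fun h => hkA (h ▸ hiA)
      have hjk : j ≠ k := fun h => hkA (h ▸ hjA)
      -- edge 1 : inl A ~ inr (mca F₂ i j)
      have hBns : mca F₂ i j ∈ nsClades F₂ := mca_nsClades h₂ hij
      have e1 : (cladeGraph F₁ F₂).Adj (Sum.inl ⟨A, hA⟩) (Sum.inr ⟨mca F₂ i j, hBns⟩) := by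
        have := adj_pair (F₁ := F₁) hij (mca_nsClades h₁ hij) hBns
        rwa [show (⟨mca F₁ i j, mca_nsClades h₁ hij⟩ : {X // X ∈ nsClades F₁}) = ⟨A, hA⟩
          from Subtype.ext hmG] at this
      -- properties of new pairs
      have hnew : ∀ a b : Fin n, a ≠ b → a ∈ A → a ∈ mca F₂ i j →
          mca F₂ a k = mca F₂ i j →
          (cladeGraph F₁ F₂).Reachable (Sum.inl ⟨A, hA⟩) (Sum.inl ⟨C, hC₁⟩) := by
        intro a b hab haA haB hBeq
        have hak : a ≠ k := fun h => hkA (h ▸ haA)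
        have hA' : A ⊂ mca F₁ a k := by
          have hsub : A ⊆ mca F₁ a k := by
            rcases comp_of_mem h₁ (mca_mem h₁ a k) hAF₁ (mem_mca_left h₁ a k) haA with h | h
            · exact absurd (h (mem_mca_right h₁ a k)) hkA
            · exact h
          exact (Finset.ssubset_iff_of_subset hsub).mpr ⟨k, mem_mca_right h₁ a k, hkA⟩
        have hA'ns : mca F₁ a k ∈ nsClades F₁ := mca_nsClades h₁ hak
        have e2 : (cladeGraph F₁ F₂).Adj (Sum.inl ⟨mca F₁ a k, hA'ns⟩)
            (Sum.inr ⟨mca F₂ i j, hBns⟩) := by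
          have := adj_pair (F₁ := F₁) hak (mca_nsClades h₁ hak) (mca_nsClades h₂ hak)
          rwa [show (⟨mca F₂ a k, mca_nsClades h₂ hak⟩ : {X // X ∈ nsClades F₂}) =
            ⟨mca F₂ i j, hBns⟩ from Subtype.ext hBeq] at this
        have hfib' : mcs F₁ F₂ (mca F₁ a k) = C := by
          have p1 : phi F₁ F₂ (Sum.inl (⟨A, hA⟩ : {X // X ∈ nsClades F₁})) =
              phi F₁ F₂ (Sum.inr (⟨mca F₂ i j, hBns⟩ : {X // X ∈ nsClades F₂})) :=
            phi_adj h₁ h₂ e1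
          have p2 : phi F₁ F₂ (Sum.inl (⟨mca F₁ a k, hA'ns⟩ : {X // X ∈ nsClades F₁})) =
              phi F₁ F₂ (Sum.inr (⟨mca F₂ i j, hBns⟩ : {X // X ∈ nsClades F₂})) :=
            phi_adj h₁ h₂ e2
          show mcs F₁ F₂ (mca F₁ a k) = C
          calc mcs F₁ F₂ (mca F₁ a k) = mcs F₁ F₂ (mca F₂ i j) := p2
            _ = mcs F₁ F₂ A := p1.symm
            _ = C := hfib
        have hcard' : n ≤ (mca F₁ a k).card + m := by
          have := Finset.card_lt_card hA'
          omega
        exact (e1.reachable.trans e2.reachable.symm).trans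
          (ih (mca F₁ a k) hA'ns hfib' hcard')
      -- which of (i,k),(j,k) keeps mca F₂ equal to mca F₂ i j
      rcases comp_of_mem h₂ (mca_mem h₂ i k) (mca_mem h₂ j k)
          (mem_mca_right h₂ i k) (mem_mca_right h₂ j k) with h | h
      · -- mca F₂ i k ⊆ mca F₂ j k : then mca F₂ j k = mca F₂ i j
        have hBeq : mca F₂ j k = mca F₂ i j := by
          apply le_antisymm
          · exact mca_le j k (mca_mem h₂ i j) (mem_mca_right h₂ i j) hkM
          · exact mca_le i j (mca_mem h₂ j k) (h (mem_mca_left h₂ i k))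
              (mem_mca_left h₂ j k)
        exact hnew j i hij.symm hjA (mem_mca_right h₂ i j) hBeq
      · have hBeq : mca F₂ i k = mca F₂ i j := by
          apply le_antisymm
          · exact mca_le i k (mca_mem h₂ i j) (mem_mca_left h₂ i j) hkM
          · exact mca_le i j (mca_mem h₂ i k) (mem_mca_left h₂ i k)
              (h (mem_mca_left h₂ j k))
        exact hnew i j hij hiA (mem_mca_left h₂ i j) hBeq

lemma climb_r (h₁ : IsCladeFamily F₁) (h₂ : IsCladeFamily F₂) {C : Finset (Fin n)}
    (hC₂ : C ∈ nsClades F₂) :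
    ∀ (m : ℕ) (B : Finset (Fin n)) (hB : B ∈ nsClades F₂),
      mcs F₁ F₂ B = C → n ≤ B.card + m →
      (cladeGraph F₁ F₂).Reachable (Sum.inr ⟨B, hB⟩) (Sum.inr ⟨C, hC₂⟩) := by
  have top : ∀ (B : Finset (Fin n)) (hB : B ∈ nsClades F₂), B ∈ F₁ → mcs F₁ F₂ B = C →
      (cladeGraph F₁ F₂).Reachable (Sum.inr ⟨B, hB⟩) (Sum.inr ⟨C, hC₂⟩) := by
    intro B hB hBF₁ hfib
    have hBC : B = C := by
      rw [← hfib, mcs_self hBF₁ (Finset.mem_filter.mp hB).1]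
    subst hBC
    exact SimpleGraph.Reachable.refl _
  intro m
  induction m with
  | zero =>
    intro B hB hfib hcard
    have hle : B.card ≤ n := le_trans (Finset.card_le_univ B) (by simp)
    have hBuniv : B = Finset.univ := Finset.eq_univ_of_card B (by simp; omega)
    exact top B hB (hBuniv ▸ h₁.1) hfib
  | succ m ih =>
    intro B hB hfib hcard
    by_cases hBF₁ : B ∈ F₁
    · exact top B hB hBF₁ hfib
    · have hBF₂ : B ∈ F₂ := (Finset.mem_filter.mp hB).1
      have hBne : B.Nonempty := Finset.card_pos.mp (by
        have := (Finset.mem_filter.mp hB).2; omega)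
      obtain ⟨i, j, k, hij, hiB, hjB, hmG, hkM, hkB⟩ := step h₂ h₁ hBF₂ hBne hBF₁
      have hAns : mca F₁ i j ∈ nsClades F₁ := mca_nsClades h₁ hij
      have e1 : (cladeGraph F₁ F₂).Adj (Sum.inl ⟨mca F₁ i j, hAns⟩) (Sum.inr ⟨B, hB⟩) := by
        have := adj_pair (F₁ := F₁) hij hAns (mca_nsClades h₂ hij)
        rwa [show (⟨mca F₂ i j, mca_nsClades h₂ hij⟩ : {X // X ∈ nsClades F₂}) = ⟨B, hB⟩
          from Subtype.ext hmG] at this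
      have hnew : ∀ a : Fin n, a ∈ B → a ∈ mca F₁ i j →
          mca F₁ a k = mca F₁ i j →
          (cladeGraph F₁ F₂).Reachable (Sum.inr ⟨B, hB⟩) (Sum.inr ⟨C, hC₂⟩) := by
        intro a haB haA hAeq
        have hak : a ≠ k := fun h => hkB (h ▸ haB)
        have hB' : B ⊂ mca F₂ a k := by
          have hsub : B ⊆ mca F₂ a k := by
            rcases comp_of_mem h₂ (mca_mem h₂ a k) hBF₂ (mem_mca_left h₂ a k) haB with h | h
            · exact absurd (h (mem_mca_right h₂ a k)) hkB
            · exact h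
          exact (Finset.ssubset_iff_of_subset hsub).mpr ⟨k, mem_mca_right h₂ a k, hkB⟩
        have hB'ns : mca F₂ a k ∈ nsClades F₂ := mca_nsClades h₂ hak
        have e2 : (cladeGraph F₁ F₂).Adj (Sum.inl ⟨mca F₁ i j, hAns⟩)
            (Sum.inr ⟨mca F₂ a k, hB'ns⟩) := by
          have := adj_pair (F₁ := F₁) hak (mca_nsClades h₁ hak) hB'ns
          rwa [show (⟨mca F₁ a k, mca_nsClades h₁ hak⟩ : {X // X ∈ nsClades F₁}) =
            ⟨mca F₁ i j, hAns⟩ from Subtype.ext hAeq] at this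
        have hfib' : mcs F₁ F₂ (mca F₂ a k) = C := by
          have p1 : phi F₁ F₂ (Sum.inl (⟨mca F₁ i j, hAns⟩ : {X // X ∈ nsClades F₁})) =
              phi F₁ F₂ (Sum.inr (⟨B, hB⟩ : {X // X ∈ nsClades F₂})) :=
            phi_adj h₁ h₂ e1
          have p2 : phi F₁ F₂ (Sum.inl (⟨mca F₁ i j, hAns⟩ : {X // X ∈ nsClades F₁})) =
              phi F₁ F₂ (Sum.inr (⟨mca F₂ a k, hB'ns⟩ : {X // X ∈ nsClades F₂})) :=
            phi_adj h₁ h₂ e2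
          show mcs F₁ F₂ (mca F₂ a k) = C
          calc mcs F₁ F₂ (mca F₂ a k) = mcs F₁ F₂ (mca F₁ i j) := p2.symm
            _ = mcs F₁ F₂ B := p1
            _ = C := hfib
        have hcard' : n ≤ (mca F₂ a k).card + m := by
          have := Finset.card_lt_card hB'
          omega
        exact (e1.reachable.symm.trans e2.reachable).trans
          (ih (mca F₂ a k) hB'ns hfib' hcard')
      rcases comp_of_mem h₁ (mca_mem h₁ i k) (mca_mem h₁ j k)
          (mem_mca_right h₁ i k) (mem_mca_right h₁ j k) with h | h
      · have hAeq : mca F₁ j k = mca F₁ i j := by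
          apply le_antisymm
          · exact mca_le j k (mca_mem h₁ i j) (mem_mca_right h₁ i j) hkM
          · exact mca_le i j (mca_mem h₁ j k) (h (mem_mca_left h₁ i k))
              (mem_mca_left h₁ j k)
        exact hnew j hjB (mem_mca_right h₁ i j) hAeq
      · have hAeq : mca F₁ i k = mca F₁ i j := by
          apply le_antisymm
          · exact mca_le i k (mca_mem h₁ i j) (mem_mca_left h₁ i j) hkM
          · exact mca_le i j (mca_mem h₁ i k) (mem_mca_left h₁ i k)
              (h (mem_mca_left h₁ j k))
        exact hnew i hiB (mem_mca_left h₁ i j) hAeq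

lemma bridge (h₁ : IsCladeFamily F₁) (h₂ : IsCladeFamily F₂) {C : Finset (Fin n)}
    (hC₁ : C ∈ nsClades F₁) (hC₂ : C ∈ nsClades F₂) :
    (cladeGraph F₁ F₂).Reachable (Sum.inr ⟨C, hC₂⟩) (Sum.inl ⟨C, hC₁⟩) := by
  obtain ⟨i, j, hij, hm⟩ := exists_pair_mca h₂ (Finset.mem_filter.mp hC₂).1
    (Finset.mem_filter.mp hC₂).2
  have hAns : mca F₁ i j ∈ nsClades F₁ := mca_nsClades h₁ hij
  have e : (cladeGraph F₁ F₂).Adj (Sum.inl ⟨mca F₁ i j, hAns⟩) (Sum.inr ⟨C, hC₂⟩) := by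
    have := adj_pair (F₁ := F₁) hij hAns (mca_nsClades h₂ hij)
    rwa [show (⟨mca F₂ i j, mca_nsClades h₂ hij⟩ : {X // X ∈ nsClades F₂}) = ⟨C, hC₂⟩
      from Subtype.ext hm] at this
  have hfib : mcs F₁ F₂ (mca F₁ i j) = C := by
    have p : phi F₁ F₂ (Sum.inl (⟨mca F₁ i j, hAns⟩ : {X // X ∈ nsClades F₁})) =
        phi F₁ F₂ (Sum.inr (⟨C, hC₂⟩ : {X // X ∈ nsClades F₂})) := phi_adj h₁ h₂ e
    have hCC : mcs F₁ F₂ C = C :=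
      mcs_self (Finset.mem_filter.mp hC₁).1 (Finset.mem_filter.mp hC₂).1
    calc mcs F₁ F₂ (mca F₁ i j) = mcs F₁ F₂ C := p
      _ = C := hCC
  exact e.reachable.symm.trans (climb_l h₁ h₂ hC₁ n (mca F₁ i j) hAns hfib (by omega))

lemma reach_of_phi_eq (h₁ : IsCladeFamily F₁) (h₂ : IsCladeFamily F₂)
    {u v : CladeVert F₁ F₂} (h : phi F₁ F₂ u = phi F₁ F₂ v) :
    (cladeGraph F₁ F₂).Reachable u v := by
  set C := phi F₁ F₂ u with hC
  have hC₁ : C ∈ nsClades F₁ := (phi_mem h₁ h₂ u).1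
  have hC₂ : C ∈ nsClades F₂ := (phi_mem h₁ h₂ u).2
  have key : ∀ w : CladeVert F₁ F₂, phi F₁ F₂ w = C →
      (cladeGraph F₁ F₂).Reachable w (Sum.inl ⟨C, hC₁⟩) := by
    intro w hw
    cases w with
    | inl A =>
      have : (⟨A.1, A.2⟩ : {X // X ∈ nsClades F₁}) = A := rfl
      exact this ▸ climb_l h₁ h₂ hC₁ n A.1 A.2 hw (by omega)
    | inr B =>
      have : (⟨B.1, B.2⟩ : {X // X ∈ nsClades F₂}) = B := rfl
      exact (this ▸ climb_r h₁ h₂ hC₂ n B.1 B.2 hw (by omega)).trans (bridge h₁ h₂ hC₁ hC₂)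
  exact (key u rfl).trans (key v (h ▸ rfl)).symm

end CladeAux

/-- The rank of the graphic matroid of the clade graph (number of vertices minus number
of connected components) equals `|clade(T₁) ∪ clade(T₂)|`; equivalently, the number of
connected components equals `|clade(T₁) ∩ clade(T₂)|`. -/
theorem cladeGraph_rank {n : ℕ} (F₁ F₂ : Finset (Finset (Fin n)))
    (h₁ : IsCladeFamily F₁) (h₂ : IsCladeFamily F₂) :
    Nat.card (cladeGraph F₁ F₂).ConnectedComponent = (nsClades F₁ ∩ nsClades F₂).card ∧
    Nat.card (CladeVert F₁ F₂) =
      Nat.card (cladeGraph F₁ F₂).ConnectedComponent + (nsClades F₁ ∪ nsClades F₂).card := by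
  classical
  have hFin : Finite (CladeVert F₁ F₂) := by
    unfold CladeVert; infer_instance
  -- the map from components to common non-singleton clades
  let g : CladeVert F₁ F₂ → {D // D ∈ nsClades F₁ ∩ nsClades F₂} := fun v =>
    ⟨CladeAux.phi F₁ F₂ v, Finset.mem_inter.mpr
      ⟨(CladeAux.phi_mem h₁ h₂ v).1, (CladeAux.phi_mem h₁ h₂ v).2⟩⟩
  have hg : ∀ u v : CladeVert F₁ F₂, (cladeGraph F₁ F₂).Reachable u v → g u = g v :=
    fun u v h => Subtype.ext (CladeAux.phi_reach h₁ h₂ h)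
  let f : (cladeGraph F₁ F₂).ConnectedComponent → {D // D ∈ nsClades F₁ ∩ nsClades F₂} :=
    Quot.lift g hg
  have hfmk : ∀ v : CladeVert F₁ F₂, f (Quot.mk _ v) = g v := fun _ => rfl
  have hgval : ∀ v : CladeVert F₁ F₂, (g v).1 = CladeAux.phi F₁ F₂ v := fun _ => rfl
  have hbij : Function.Bijective f := by
    constructor
    · intro c₁ c₂ hfc
      induction c₁ using Quot.inductionOn with | h u =>
      induction c₂ using Quot.inductionOn with | h v =>
      rw [hfmk, hfmk] at hfc
      have hphi : CladeAux.phi F₁ F₂ u = CladeAux.phi F₁ F₂ v := by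
        rw [← hgval, ← hgval, hfc]
      exact Quot.sound (CladeAux.reach_of_phi_eq h₁ h₂ hphi)
    · rintro ⟨D, hD⟩
      obtain ⟨hD₁, hD₂⟩ := Finset.mem_inter.mp hD
      refine ⟨Quot.mk _ (Sum.inl ⟨D, hD₁⟩), ?_⟩
      refine (hfmk _).trans ?_
      refine Subtype.ext ?_
      refine (hgval _).trans ?_
      show CladeAux.mcs F₁ F₂ D = D
      exact CladeAux.mcs_self (Finset.mem_filter.mp hD₁).1 (Finset.mem_filter.mp hD₂).1
  have hcount : Nat.card (cladeGraph F₁ F₂).ConnectedComponent =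
      (nsClades F₁ ∩ nsClades F₂).card := by
    rw [Nat.card_eq_of_bijective f hbij]
    rw [Nat.card_eq_fintype_card, Fintype.card_coe]
  refine ⟨hcount, ?_⟩
  have hsum : Nat.card (CladeVert F₁ F₂) = (nsClades F₁).card + (nsClades F₂).card := by
    show Nat.card ({A // A ∈ nsClades F₁} ⊕ {A // A ∈ nsClades F₂}) = _
    rw [Nat.card_sum, Nat.card_eq_fintype_card, Nat.card_eq_fintype_card,
      Fintype.card_coe, Fintype.card_coe]
  rw [hsum, hcount]
  have := Finset.card_inter_add_card_union (nsClades F₁) (nsClades F₂)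
  omega
end

section
/- Every Laman graph is Henneberg: if H is a graph on n ≥ 2 vertices with exactly 2n − 3 edges such that every subgraph on k vertices has at most 2k − 3 edges, then H can be constructed from K₂ by a sequence of Henneberg moves. -/
/-- The graph on `Fin (n+1)` obtained from `H` on `Fin n` by adding a new vertex
(the last one) adjacent to the vertices in `s`. -/
def addVertex {n : ℕ} (H : SimpleGraph (Fin n)) (s : Finset (Fin n)) :
    SimpleGraph (Fin (n + 1)) :=
  SimpleGraph.fromRel (fun x y =>
    (∃ x' y' : Fin n, x = x'.castSucc ∧ y = y'.castSucc ∧ H.Adj x' y') ∨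
    (x = Fin.last n ∧ ∃ a ∈ s, y = a.castSucc))

/-- Henneberg graphs: `K₂`, and graphs obtained from a smaller Henneberg graph by a
Henneberg move of type 1 (new vertex joined to two existing vertices) or type 2 (delete
an edge `ab` and join a new vertex to `a`, `b` and a third vertex `c`), up to
relabeling of the vertices. -/
inductive Henneberg : (n : ℕ) → SimpleGraph (Fin n) → Prop
  | base : Henneberg 2 ⊤
  | move1 {n : ℕ} {H : SimpleGraph (Fin n)} (a b : Fin n) :
      a ≠ b → Henneberg n H → Henneberg (n + 1) (addVertex H {a, b})
  | move2 {n : ℕ} {H : SimpleGraph (Fin n)} (a b c : Fin n) :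
      H.Adj a b → c ≠ a → c ≠ b → Henneberg n H →
      Henneberg (n + 1) (addVertex (H.deleteEdges {s(a, b)}) {a, b, c})
  | iso {n : ℕ} {H H' : SimpleGraph (Fin n)} :
      SimpleGraph.Iso H H' → Henneberg n H → Henneberg n H'

/-- The number of edges of `H` lying inside the vertex set `V`. -/
noncomputable def edgesWithin {n : ℕ} (H : SimpleGraph (Fin n)) (V : Finset (Fin n)) : ℕ :=
  Nat.card {e : Sym2 (Fin n) // e ∈ H.edgeSet ∧ ∀ v ∈ e, v ∈ V}

/-- A graph on `n` vertices is Laman if it has `2n − 3` edges and every subgraph on `v`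
vertices has at most `2v − 3` edges. -/
def IsLaman (n : ℕ) (H : SimpleGraph (Fin n)) : Prop :=
  Nat.card H.edgeSet = 2 * n - 3 ∧
  ∀ V : Finset (Fin n), 2 ≤ V.card → edgesWithin H V ≤ 2 * V.card - 3
open SimpleGraph Set

variable {n : ℕ}

/-- The set of edges of `H` lying within the vertex set `V`. -/
def IE {n : ℕ} (H : SimpleGraph (Fin n)) (V : Set (Fin n)) : Set (Sym2 (Fin n)) :=
  {e | e ∈ H.edgeSet ∧ ∀ v ∈ e, v ∈ V}

lemma mem_IE {H : SimpleGraph (Fin n)} {V : Set (Fin n)} {x y : Fin n} :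
    s(x, y) ∈ IE H V ↔ H.Adj x y ∧ x ∈ V ∧ y ∈ V := by
  constructor
  · rintro ⟨he, hv⟩
    exact ⟨he, hv x (by simp), hv y (by simp)⟩
  · rintro ⟨ha, hx, hy⟩
    refine ⟨ha, fun v hv => ?_⟩
    rcases Sym2.mem_iff.mp hv with rfl | rfl <;> assumption

lemma edgesWithin_eq (H : SimpleGraph (Fin n)) (V : Finset (Fin n)) :
    edgesWithin H V = (IE H ↑V).ncard := by
  rw [← Nat.card_coe_set_eq]
  rfl

/-- The set-based version of the Laman property. -/
def Laman' (n : ℕ) (H : SimpleGraph (Fin n)) : Prop :=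
  H.edgeSet.ncard = 2 * n - 3 ∧
  ∀ V : Set (Fin n), 2 ≤ V.ncard → (IE H V).ncard ≤ 2 * V.ncard - 3

lemma isLaman_iff (H : SimpleGraph (Fin n)) : IsLaman n H ↔ Laman' n H := by
  classical
  constructor
  · rintro ⟨h1, h2⟩
    refine ⟨by rw [← Nat.card_coe_set_eq]; exact h1, fun V hV => ?_⟩
    have := h2 V.toFinset (le_trans hV (le_of_eq (Set.ncard_eq_toFinset_card' V)))
    rwa [edgesWithin_eq, Set.coe_toFinset, ← Set.ncard_eq_toFinset_card'] at this
  · rintro ⟨h1, h2⟩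
    refine ⟨by rw [Nat.card_coe_set_eq]; exact h1, fun V hV => ?_⟩
    have := h2 ↑V (by rwa [Set.ncard_coe_finset])
    rwa [Set.ncard_coe_finset, ← edgesWithin_eq] at this
lemma IE_mono {H : SimpleGraph (Fin n)} {V W : Set (Fin n)} (h : V ⊆ W) :
    IE H V ⊆ IE H W := fun e he => ⟨he.1, fun v hv => h (he.2 v hv)⟩

lemma IE_inter (H : SimpleGraph (Fin n)) (A B : Set (Fin n)) :
    IE H A ∩ IE H B = IE H (A ∩ B) := by
  ext e
  constructor
  · rintro ⟨⟨he, ha⟩, ⟨_, hb⟩⟩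
    exact ⟨he, fun v hv => ⟨ha v hv, hb v hv⟩⟩
  · rintro ⟨he, h⟩
    exact ⟨⟨he, fun v hv => (h v hv).1⟩, ⟨he, fun v hv => (h v hv).2⟩⟩

lemma IE_submod (H : SimpleGraph (Fin n)) (A B : Set (Fin n)) :
    (IE H A).ncard + (IE H B).ncard ≤ (IE H (A ∪ B)).ncard + (IE H (A ∩ B)).ncard := by
  rw [← Set.ncard_union_add_ncard_inter (IE H A) (IE H B) (Set.toFinite _) (Set.toFinite _),
    IE_inter]
  gcongr
  · exact Set.toFinite _
  · exact Set.union_subset (IE_mono Set.subset_union_left) (IE_mono Set.subset_union_right)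

lemma IE_eq_empty {H : SimpleGraph (Fin n)} {V : Set (Fin n)} (h : V.ncard ≤ 1) :
    IE H V = ∅ := by
  ext e
  simp only [Set.mem_empty_iff_false, iff_false]
  induction e with
  | h x y =>
    rw [mem_IE]
    rintro ⟨ha, hx, hy⟩
    exact ha.ne (((Set.ncard_le_one_iff_eq (Set.toFinite _)).mp h).elim
      (fun h0 => by simp [h0] at hx) (fun ⟨a, h0⟩ => by rw [h0] at hx hy; simp_all))

lemma IE_insert {H : SimpleGraph (Fin n)} {v : Fin n} {S : Set (Fin n)} (hv : v ∉ S) :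
    IE H (insert v S) = IE H S ∪ (fun u => s(v, u)) '' (H.neighborSet v ∩ S) := by
  ext e
  induction e with
  | h x y =>
    simp only [mem_IE, Set.mem_union, Set.mem_image, Set.mem_inter_iff,
      SimpleGraph.mem_neighborSet, Set.mem_insert_iff]
    constructor
    · rintro ⟨ha, hx | hx, hy | hy⟩
      · exact absurd (hx ▸ hy ▸ rfl) ha.ne
      · subst hx; exact Or.inr ⟨y, ⟨ha, hy⟩, rfl⟩
      · subst hy; exact Or.inr ⟨x, ⟨ha.symm, hx⟩, Sym2.eq_swap⟩
      · exact Or.inl ⟨ha, hx, hy⟩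
    · rintro (⟨ha, hx, hy⟩ | ⟨u, ⟨ha, hu⟩, he⟩)
      · exact ⟨ha, Or.inr hx, Or.inr hy⟩
      · rcases Sym2.eq_iff.mp he with ⟨rfl, rfl⟩ | ⟨rfl, rfl⟩
        · exact ⟨ha, Or.inl rfl, Or.inr hu⟩
        · exact ⟨ha.symm, Or.inr hu, Or.inl rfl⟩

lemma ncard_IE_insert {H : SimpleGraph (Fin n)} {v : Fin n} {S : Set (Fin n)} (hv : v ∉ S) :
    (IE H (insert v S)).ncard = (IE H S).ncard + (H.neighborSet v ∩ S).ncard := by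
  have hdisj : Disjoint (IE H S) ((fun u => s(v, u)) '' (H.neighborSet v ∩ S)) := by
    rw [Set.disjoint_left]
    rintro e he ⟨u, ⟨ha, hu⟩, rfl⟩
    exact hv (he.2 v (by simp))
  have hinj : Set.InjOn (fun u => s(v, u)) (H.neighborSet v ∩ S) := by
    rintro x ⟨hx, hx'⟩ y ⟨hy, hy'⟩ he
    rcases Sym2.eq_iff.mp he with ⟨-, h⟩ | ⟨h, h'⟩
    · exact h
    · exact absurd h' hx.ne'
  rw [IE_insert hv, Set.ncard_union_eq hdisj (Set.toFinite _) (Set.toFinite _),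
    Set.ncard_image_of_injOn hinj]
lemma IE_univ (H : SimpleGraph (Fin n)) : IE H Set.univ = H.edgeSet := by
  ext e; exact ⟨fun h => h.1, fun h => ⟨h, fun v _ => trivial⟩⟩

lemma IE_comap_image {m k : ℕ} {f : Fin m → Fin k} (hf : Function.Injective f)
    (G : SimpleGraph (Fin k)) (V : Set (Fin m)) :
    Sym2.map f '' IE (G.comap f) V = IE G (f '' V) := by
  ext e
  constructor
  · rintro ⟨e', he', rfl⟩
    induction e' with
    | h x y =>
      rw [mem_IE] at he'
      exact mem_IE.mpr ⟨he'.1, ⟨x, he'.2.1, rfl⟩, ⟨y, he'.2.2, rfl⟩⟩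
  · intro he
    induction e with
    | h u w =>
      rw [mem_IE] at he
      obtain ⟨ha, ⟨x, hx, rfl⟩, ⟨y, hy, rfl⟩⟩ := he
      exact ⟨s(x, y), mem_IE.mpr ⟨ha, hx, hy⟩, rfl⟩

lemma ncard_IE_comap {m k : ℕ} {f : Fin m → Fin k} (hf : Function.Injective f)
    (G : SimpleGraph (Fin k)) (V : Set (Fin m)) :
    (IE (G.comap f) V).ncard = (IE G (f '' V)).ncard := by
  rw [← IE_comap_image hf, Set.ncard_image_of_injOn (Sym2.map.injective hf).injOn]

/-- Sparsity: every vertex set of size `≥ 2` spans at most `2k − 3` edges. -/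
def Sparse {n : ℕ} (H : SimpleGraph (Fin n)) : Prop :=
  ∀ V : Set (Fin n), 2 ≤ V.ncard → (IE H V).ncard ≤ 2 * V.ncard - 3

lemma Sparse.comap {m k : ℕ} {f : Fin m → Fin k} (hf : Function.Injective f)
    {G : SimpleGraph (Fin k)} (hG : Sparse G) : Sparse (G.comap f) := by
  intro V hV
  rw [ncard_IE_comap hf]
  have himg : (f '' V).ncard = V.ncard := Set.ncard_image_of_injective V hf
  rw [← himg] at hV ⊢
  exact hG _ hV

lemma ncard_edgeSet_decomp (G : SimpleGraph (Fin n)) (v : Fin n) :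
    G.edgeSet.ncard = (IE G {v}ᶜ).ncard + (G.neighborSet v).ncard := by
  classical
  have hdecomp : G.edgeSet = IE G {v}ᶜ ∪ G.incidenceSet v := by
    ext e
    induction e with
    | h x y =>
      simp only [Set.mem_union, mem_IE, SimpleGraph.incidenceSet,
        Set.mem_setOf_eq, Set.mem_compl_iff, Set.mem_singleton_iff]
      constructor
      · intro h
        by_cases hx : x = v
        · exact Or.inr ⟨h, by simp [hx]⟩
        · by_cases hy : y = v
          · exact Or.inr ⟨h, by simp [hy]⟩
          · exact Or.inl ⟨h, hx, hy⟩
      · rintro (⟨h, -⟩ | ⟨h, -⟩) <;> exact h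
  have hdisj : Disjoint (IE G {v}ᶜ) (G.incidenceSet v) := by
    rw [Set.disjoint_left]
    rintro e he ⟨he', hv⟩
    exact he.2 v hv rfl
  have hinc : (G.incidenceSet v).ncard = (G.neighborSet v).ncard := by
    rw [← Nat.card_coe_set_eq, ← Nat.card_coe_set_eq]
    exact Nat.card_congr (G.incidenceSetEquivNeighborSet v)
  rw [hdecomp, Set.ncard_union_eq hdisj (Set.toFinite _) (Set.toFinite _), hinc]

lemma range_castSucc_eq : (Set.range (Fin.castSucc : Fin n → Fin (n+1))) = {Fin.last n}ᶜ := by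
  rw [Fin.range_castSucc]
  ext x
  simp only [Set.mem_setOf_eq, Set.mem_compl_iff, Set.mem_singleton_iff, Fin.ext_iff,
    Fin.val_last]
  have := x.isLt
  omega
lemma castSucc_ne_last (a : Fin n) : a.castSucc ≠ Fin.last n := (Fin.castSucc_lt_last a).ne

lemma addVertex_adj_castSucc {H : SimpleGraph (Fin n)} {s : Finset (Fin n)} {a b : Fin n} :
    (addVertex H s).Adj a.castSucc b.castSucc ↔ H.Adj a b := by
  rw [addVertex, SimpleGraph.fromRel_adj]
  constructor
  · rintro ⟨hne, (⟨x', y', hx, hy, ha⟩ | ⟨hl, -⟩) | (⟨x', y', hx, hy, ha⟩ | ⟨hl, -⟩)⟩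
    · rwa [Fin.castSucc_injective n hx, Fin.castSucc_injective n hy]
    · exact absurd hl (castSucc_ne_last a)
    · rw [Fin.castSucc_injective n hx, Fin.castSucc_injective n hy]; exact ha.symm
    · exact absurd hl (castSucc_ne_last b)
  · intro ha
    exact ⟨fun he => ha.ne (Fin.castSucc_injective n he),
      Or.inl (Or.inl ⟨a, b, rfl, rfl, ha⟩)⟩

lemma addVertex_adj_last {H : SimpleGraph (Fin n)} {s : Finset (Fin n)} {b : Fin n} :
    (addVertex H s).Adj (Fin.last n) b.castSucc ↔ b ∈ s := by
  rw [addVertex, SimpleGraph.fromRel_adj]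
  constructor
  · rintro ⟨hne, (⟨x', y', hx, -, -⟩ | ⟨-, a, ha, hb⟩) | (⟨x', y', -, hy, -⟩ | ⟨hl, -⟩)⟩
    · exact absurd hx.symm (castSucc_ne_last x')
    · rwa [Fin.castSucc_injective n hb]
    · exact absurd hy.symm (castSucc_ne_last y')
    · exact absurd hl (castSucc_ne_last b)
  · intro hb
    exact ⟨(castSucc_ne_last b).symm, Or.inl (Or.inr ⟨rfl, b, hb, rfl⟩)⟩

lemma eq_addVertex (G : SimpleGraph (Fin (n+1))) (s : Finset (Fin n))
    (h : ∀ a : Fin n, G.Adj (Fin.last n) a.castSucc ↔ a ∈ s) :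
    G = addVertex (G.comap Fin.castSucc) s := by
  ext x y
  induction x using Fin.lastCases with
  | last =>
    induction y using Fin.lastCases with
    | last => simp
    | cast b => rw [addVertex_adj_last]; exact h b
  | cast a =>
    induction y using Fin.lastCases with
    | last =>
      rw [SimpleGraph.adj_comm, (addVertex _ s).adj_comm, addVertex_adj_last]
      exact h a
    | cast b => rw [addVertex_adj_castSucc, SimpleGraph.comap_adj]
lemma sum_ncard_neighborSet (G : SimpleGraph (Fin n)) :
    ∑ v : Fin n, (G.neighborSet v).ncard = 2 * G.edgeSet.ncard := by
  classical
  have h := SimpleGraph.sum_degrees_eq_twice_card_edges G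
  have h1 : ∀ v, (G.neighborSet v).ncard = G.degree v := by
    intro v
    rw [Set.ncard_eq_toFinset_card']
    rfl
  have h2 : G.edgeSet.ncard = G.edgeFinset.card := by
    rw [Set.ncard_eq_toFinset_card']
    convert rfl
    ext e; simp
  rw [h2]
  simp_rw [h1]
  exact h

lemma ncard_compl_singleton (v : Fin (n+1)) : ({v}ᶜ : Set (Fin (n+1))).ncard = n := by
  have := Set.ncard_add_ncard_compl {v} (Set.toFinite _) (Set.toFinite _)
  rw [Set.ncard_singleton, Nat.card_eq_fintype_card, Fintype.card_fin] at this
  omega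

lemma exists_low_degree {G : SimpleGraph (Fin (n+1))} (hn : 2 ≤ n) (hG : Laman' (n+1) G) :
    ∃ v, 2 ≤ (G.neighborSet v).ncard ∧ (G.neighborSet v).ncard ≤ 3 := by
  by_contra hc
  push_neg at hc
  -- min degree ≥ 2
  have hmin : ∀ v, 2 ≤ (G.neighborSet v).ncard := by
    intro v
    by_contra hv
    push_neg at hv
    have hdec := ncard_edgeSet_decomp G v
    have hsp := hG.2 {v}ᶜ (by rw [ncard_compl_singleton]; omega)
    rw [ncard_compl_singleton] at hsp
    rw [hG.1] at hdec
    omega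
  have hbig : ∀ v, 4 ≤ (G.neighborSet v).ncard := by
    intro v
    have := hc v (hmin v)
    omega
  have hsum := sum_ncard_neighborSet G
  rw [hG.1] at hsum
  have : ∑ v : Fin (n+1), (G.neighborSet v).ncard ≥ ∑ _v : Fin (n+1), 4 :=
    Finset.sum_le_sum (fun v _ => hbig v)
  rw [Finset.sum_const, Finset.card_univ, Fintype.card_fin, smul_eq_mul] at this
  omega

lemma laman'_comap {G : SimpleGraph (Fin (n+1))} (σ : Fin (n+1) ≃ Fin (n+1))
    (hG : Laman' (n+1) G) : Laman' (n+1) (G.comap ⇑σ) := by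
  constructor
  · rw [← IE_univ, ncard_IE_comap σ.injective, Set.image_univ, σ.range_eq_univ, IE_univ]
    exact hG.1
  · exact Sparse.comap σ.injective hG.2

lemma neighborSet_comap {m : ℕ} (G : SimpleGraph (Fin (m+1))) (σ : Fin (m+1) ≃ Fin (m+1))
    (x : Fin (m+1)) :
    (G.comap ⇑σ).neighborSet x = ⇑σ ⁻¹' (G.neighborSet (σ x)) := by
  ext u
  simp [SimpleGraph.comap_adj]

lemma ncard_neighborSet_comap {m : ℕ} (G : SimpleGraph (Fin (m+1))) (σ : Fin (m+1) ≃ Fin (m+1))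
    (x : Fin (m+1)) :
    ((G.comap ⇑σ).neighborSet x).ncard = (G.neighborSet (σ x)).ncard := by
  rw [_root_.neighborSet_comap]
  have h := Set.ncard_image_of_injective (⇑σ ⁻¹' (G.neighborSet (σ x))) σ.injective
  rw [Set.image_preimage_eq _ σ.surjective] at h
  exact h.symm
/-- A tight vertex set: spans exactly `2k − 3` edges. -/
def Tight {n : ℕ} (K : SimpleGraph (Fin n)) (V : Set (Fin n)) : Prop :=
  2 ≤ V.ncard ∧ (IE K V).ncard = 2 * V.ncard - 3

lemma Tight.union {K : SimpleGraph (Fin n)} (hK : Sparse K) {A B : Set (Fin n)}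
    (hA : Tight K A) (hB : Tight K B) (hAB : 2 ≤ (A ∩ B).ncard) : Tight K (A ∪ B) := by
  have hsub := IE_submod K A B
  have hie := Set.ncard_union_add_ncard_inter A B (Set.toFinite _) (Set.toFinite _)
  have hspI := hK _ hAB
  have hU2 : 2 ≤ (A ∪ B).ncard :=
    le_trans hA.1 (Set.ncard_le_ncard Set.subset_union_left (Set.toFinite _))
  have hspU := hK (A ∪ B) hU2
  have h1 := hA.1
  have h2 := hB.1
  have h3 := hA.2
  have h4 := hB.2
  exact ⟨hU2, by omega⟩

lemma ncard_edgeSet_comap_castSucc (G : SimpleGraph (Fin (n+1))) :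
    (G.comap (Fin.castSucc : Fin n → Fin (n+1))).edgeSet.ncard
      = (IE G {Fin.last n}ᶜ).ncard := by
  rw [← IE_univ, ncard_IE_comap (Fin.castSucc_injective n), Set.image_univ, range_castSucc_eq]

lemma no_tight_with_three {G : SimpleGraph (Fin (n+1))} (hG : Laman' (n+1) G)
    {T : Set (Fin n)} (hT2 : 2 ≤ T.ncard)
    (hTe : 2 * T.ncard - 3 ≤ (IE (G.comap Fin.castSucc) T).ncard)
    (h3 : 3 ≤ (G.neighborSet (Fin.last n) ∩ (Fin.castSucc '' T)).ncard) : False := by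
  set S := Fin.castSucc '' T with hSdef
  have hlast : Fin.last n ∉ S := by
    rintro ⟨x, -, hx⟩
    exact castSucc_ne_last x hx
  have hins := ncard_IE_insert (H := G) (S := S) hlast
  have hIE : (IE (G.comap (Fin.castSucc : Fin n → Fin (n+1))) T).ncard = (IE G S).ncard :=
    ncard_IE_comap (Fin.castSucc_injective n) G T
  have hS : S.ncard = T.ncard := Set.ncard_image_of_injective T (Fin.castSucc_injective n)
  have hins_card : (insert (Fin.last n) S).ncard = S.ncard + 1 :=
    Set.ncard_insert_of_notMem hlast (Set.toFinite _)
  have hsp := hG.2 (insert (Fin.last n) S) (by omega)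
  rw [hins_card] at hsp
  omega

lemma edgeSet_sup_single {K : SimpleGraph (Fin n)} {p q : Fin n} (hpq : p ≠ q) :
    (K ⊔ SimpleGraph.fromEdgeSet {s(p, q)}).edgeSet = insert s(p, q) K.edgeSet := by
  rw [SimpleGraph.edgeSet_sup, SimpleGraph.edgeSet_fromEdgeSet]
  have hd : ({s(p, q)} : Set (Sym2 (Fin n))) \ {e | e.IsDiag} = {s(p, q)} := by
    ext e
    simp only [Set.mem_diff, Set.mem_singleton_iff, Set.mem_setOf_eq]
    constructor
    · rintro ⟨h1, -⟩; exact h1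
    · rintro rfl; exact ⟨rfl, by simp [hpq]⟩
  rw [Sym2.diagSet_eq_setOfPred_isDiag, hd, Set.union_comm, Set.insert_eq]

lemma IE_sup_single_of_mem {K : SimpleGraph (Fin n)} {p q : Fin n} (hpq : p ≠ q)
    {V : Set (Fin n)} (hp : p ∈ V) (hq : q ∈ V) :
    IE (K ⊔ SimpleGraph.fromEdgeSet {s(p, q)}) V = insert s(p, q) (IE K V) := by
  ext e
  simp only [IE, Set.mem_setOf_eq, edgeSet_sup_single hpq, Set.mem_insert_iff]
  constructor
  · rintro ⟨(rfl | he), hv⟩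
    · exact Or.inl rfl
    · exact Or.inr ⟨he, hv⟩
  · rintro (rfl | ⟨he, hv⟩)
    · refine ⟨Or.inl rfl, fun v hv => ?_⟩
      rcases Sym2.mem_iff.mp hv with rfl | rfl <;> assumption
    · exact ⟨Or.inr he, hv⟩

lemma IE_sup_single_of_not_mem {K : SimpleGraph (Fin n)} {p q : Fin n} (hpq : p ≠ q)
    {V : Set (Fin n)} (h : ¬(p ∈ V ∧ q ∈ V)) :
    IE (K ⊔ SimpleGraph.fromEdgeSet {s(p, q)}) V = IE K V := by
  ext e
  simp only [IE, Set.mem_setOf_eq, edgeSet_sup_single hpq, Set.mem_insert_iff]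
  constructor
  · rintro ⟨(rfl | he), hv⟩
    · exact absurd ⟨hv p (by simp), hv q (by simp)⟩ h
    · exact ⟨he, hv⟩
  · rintro ⟨he, hv⟩
    exact ⟨Or.inr he, hv⟩

lemma add_edge_dichotomy (hn : 2 ≤ n) {K : SimpleGraph (Fin n)} (hK : Sparse K)
    (hKcard : K.edgeSet.ncard = 2 * n - 4) {p q : Fin n} (hpq : p ≠ q)
    (hnadj : ¬K.Adj p q) :
    Laman' n (K ⊔ SimpleGraph.fromEdgeSet {s(p, q)}) ∨ ∃ T, Tight K T ∧ p ∈ T ∧ q ∈ T := by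
  by_cases hbad : ∃ T, Tight K T ∧ p ∈ T ∧ q ∈ T
  · exact Or.inr hbad
  push_neg at hbad
  left
  constructor
  · rw [edgeSet_sup_single hpq,
      Set.ncard_insert_of_notMem (fun h => hnadj (K.mem_edgeSet.mp h))
        (Set.toFinite _), hKcard]
    omega
  · intro V hV
    by_cases hpV : p ∈ V ∧ q ∈ V
    · rw [IE_sup_single_of_mem hpq hpV.1 hpV.2]
      have hle := Set.ncard_insert_le s(p, q) (IE K V)
      have hsp := hK V hV
      have hnt : (IE K V).ncard ≠ 2 * V.ncard - 3 := by
        intro h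
        exact hbad V ⟨hV, h⟩ hpV.1 hpV.2
      omega
    · rw [IE_sup_single_of_not_mem hpq hpV]
      exact hK V hV

lemma deleteEdges_sup_single {K : SimpleGraph (Fin n)} {p q : Fin n} (hpq : p ≠ q)
    (hnadj : ¬K.Adj p q) :
    (K ⊔ SimpleGraph.fromEdgeSet {s(p, q)}).deleteEdges {s(p, q)} = K := by
  ext x y
  rw [SimpleGraph.deleteEdges_adj, SimpleGraph.sup_adj, SimpleGraph.fromEdgeSet_adj]
  constructor
  · rintro ⟨hK' | ⟨he, -⟩, hne⟩
    · exact hK'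
    · exact absurd he hne
  · intro h
    refine ⟨Or.inl h, fun he => hnadj ?_⟩
    rw [Set.mem_singleton_iff] at he
    rcases Sym2.eq_iff.mp he with ⟨rfl, rfl⟩ | ⟨rfl, rfl⟩
    · exact h
    · exact h.symm
lemma ncard_triple {α : Type*} {a b c : α} (hab : a ≠ b) (hac : a ≠ c) (hbc : b ≠ c) :
    ({a, b, c} : Set α).ncard = 3 :=
  Set.ncard_eq_three.mpr ⟨a, b, c, hab, hac, hbc, rfl⟩

lemma exists_good_pair (hn : 2 ≤ n) {G : SimpleGraph (Fin (n+1))} (hG : Laman' (n+1) G)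
    {a b c : Fin n} (hab : a ≠ b) (hac : a ≠ c) (hbc : b ≠ c)
    (hnbrs : G.neighborSet (Fin.last n) = {a.castSucc, b.castSucc, c.castSucc}) :
    ∃ p q r : Fin n, (∀ x : Fin n, (x = p ∨ x = q ∨ x = r) ↔ (x = a ∨ x = b ∨ x = c)) ∧
      p ≠ q ∧ r ≠ p ∧ r ≠ q ∧ ¬(G.comap Fin.castSucc).Adj p q ∧
      Laman' n ((G.comap Fin.castSucc) ⊔ SimpleGraph.fromEdgeSet {s(p, q)}) := by
  set K := G.comap (Fin.castSucc : Fin n → Fin (n+1)) with hKdef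
  have hKsparse : Sparse K := Sparse.comap (Fin.castSucc_injective n) hG.2
  have hab' : a.castSucc ≠ b.castSucc := fun h => hab (Fin.castSucc_injective n h)
  have hac' : a.castSucc ≠ c.castSucc := fun h => hac (Fin.castSucc_injective n h)
  have hbc' : b.castSucc ≠ c.castSucc := fun h => hbc (Fin.castSucc_injective n h)
  have hdeg : (G.neighborSet (Fin.last n)).ncard = 3 := by
    rw [hnbrs]; exact ncard_triple hab' hac' hbc'
  have hKcard : K.edgeSet.ncard = 2 * n - 4 := by
    have hdec := ncard_edgeSet_decomp G (Fin.last n)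
    have hE := ncard_edgeSet_comap_castSucc G
    rw [hG.1, hdeg] at hdec
    rw [← hKdef] at hE
    omega
  -- no tight set of K contains all of a, b, c
  have hno3 : ∀ T : Set (Fin n), Tight K T → ¬(a ∈ T ∧ b ∈ T ∧ c ∈ T) := by
    rintro T hT ⟨haT, hbT, hcT⟩
    refine no_tight_with_three hG hT.1 (le_of_eq hT.2.symm) ?_
    have hsub : ({a.castSucc, b.castSucc, c.castSucc} : Set (Fin (n+1)))
        ⊆ G.neighborSet (Fin.last n) ∩ (Fin.castSucc '' T) := by
      intro x hx
      simp only [Set.mem_insert_iff, Set.mem_singleton_iff] at hx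
      rcases hx with rfl | rfl | rfl
      · exact ⟨by rw [hnbrs]; simp, ⟨a, haT, rfl⟩⟩
      · exact ⟨by rw [hnbrs]; simp, ⟨b, hbT, rfl⟩⟩
      · exact ⟨by rw [hnbrs]; simp, ⟨c, hcT, rfl⟩⟩
    calc (3 : ℕ) = ({a.castSucc, b.castSucc, c.castSucc} : Set (Fin (n+1))).ncard :=
          (ncard_triple hab' hac' hbc').symm
      _ ≤ _ := Set.ncard_le_ncard hsub (Set.toFinite _)
  -- adjacent pairs give tight sets
  have hadjbad : ∀ p q : Fin n, p ≠ q → K.Adj p q → ∃ T, Tight K T ∧ p ∈ T ∧ q ∈ T := by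
    intro p q hpq hadj
    refine ⟨{p, q}, ⟨by rw [Set.ncard_pair hpq], ?_⟩, by simp, by simp⟩
    rw [Set.ncard_pair hpq]
    have hIE : IE K {p, q} = {s(p, q)} := by
      ext e
      induction e with
      | h x y =>
        rw [mem_IE]
        simp only [Set.mem_singleton_iff, Set.mem_insert_iff]
        constructor
        · rintro ⟨hxy, (rfl | rfl), (rfl | rfl)⟩
          · exact absurd rfl hxy.ne
          · rfl
          · exact Sym2.eq_swap
          · exact absurd rfl hxy.ne
        · intro he
          rcases Sym2.eq_iff.mp he with ⟨rfl, rfl⟩ | ⟨rfl, rfl⟩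
          · exact ⟨hadj, Or.inl rfl, Or.inr rfl⟩
          · exact ⟨hadj.symm, Or.inr rfl, Or.inl rfl⟩
    rw [hIE, Set.ncard_singleton]
  -- dichotomy per pair
  have hpair : ∀ p q : Fin n, p ≠ q →
      (¬K.Adj p q ∧ Laman' n (K ⊔ SimpleGraph.fromEdgeSet {s(p, q)})) ∨
      (∃ T, Tight K T ∧ p ∈ T ∧ q ∈ T) := by
    intro p q hpq
    by_cases hadj : K.Adj p q
    · exact Or.inr (hadjbad p q hpq hadj)
    · rcases add_edge_dichotomy hn hKsparse hKcard hpq hadj with h | h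
      · exact Or.inl ⟨hadj, h⟩
      · exact Or.inr h
  -- not all three pairs can be bad
  have hnotall : ¬((∃ T, Tight K T ∧ a ∈ T ∧ b ∈ T) ∧ (∃ T, Tight K T ∧ a ∈ T ∧ c ∈ T) ∧
      (∃ T, Tight K T ∧ b ∈ T ∧ c ∈ T)) := by
    rintro ⟨⟨T1, hT1, ha1, hb1⟩, ⟨T2, hT2, ha2, hc2⟩, ⟨T3, hT3, hb3, hc3⟩⟩
    have hsmall : ∀ (X Y : Set (Fin n)), Tight K X → Tight K Y →
        a ∈ X ∪ Y → b ∈ X ∪ Y → c ∈ X ∪ Y → (X ∩ Y).ncard ≤ 1 := by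
      intro X Y hX hY haU hbU hcU
      by_contra h
      push_neg at h
      exact hno3 _ (Tight.union hKsparse hX hY h) ⟨haU, hbU, hcU⟩
    have h12 : (T1 ∩ T2).ncard ≤ 1 :=
      hsmall T1 T2 hT1 hT2 (Or.inl ha1) (Or.inl hb1) (Or.inr hc2)
    have h13 : (T1 ∩ T3).ncard ≤ 1 :=
      hsmall T1 T3 hT1 hT3 (Or.inl ha1) (Or.inl hb1) (Or.inr hc3)
    have h23 : (T2 ∩ T3).ncard ≤ 1 :=
      hsmall T2 T3 hT2 hT3 (Or.inl ha2) (Or.inr hb3) (Or.inl hc2)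
    have h12' : 1 ≤ (T1 ∩ T2).ncard :=
      (Set.ncard_pos (Set.toFinite _)).mpr ⟨a, ha1, ha2⟩
    -- vertex counts
    have hu12 := Set.ncard_union_add_ncard_inter T1 T2 (Set.toFinite _) (Set.toFinite _)
    have hu := Set.ncard_union_add_ncard_inter (T1 ∪ T2) T3 (Set.toFinite _) (Set.toFinite _)
    have hbc2 : 2 ≤ ((T1 ∪ T2) ∩ T3).ncard := by
      have hsub : ({b, c} : Set (Fin n)) ⊆ (T1 ∪ T2) ∩ T3 := by
        rintro x hx
        simp only [Set.mem_insert_iff, Set.mem_singleton_iff] at hx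
        rcases hx with rfl | rfl
        · exact ⟨Or.inl hb1, hb3⟩
        · exact ⟨Or.inr hc2, hc3⟩
      calc (2 : ℕ) = ({b, c} : Set (Fin n)).ncard := (Set.ncard_pair hbc).symm
        _ ≤ _ := Set.ncard_le_ncard hsub (Set.toFinite _)
    -- edge counts
    have hd12 : IE K T1 ∩ IE K T2 = ∅ := by rw [IE_inter]; exact IE_eq_empty h12
    have hd13 : IE K T1 ∩ IE K T3 = ∅ := by rw [IE_inter]; exact IE_eq_empty h13
    have hd23 : IE K T2 ∩ IE K T3 = ∅ := by rw [IE_inter]; exact IE_eq_empty h23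
    have hD12 : Disjoint (IE K T1) (IE K T2) := Set.disjoint_iff_inter_eq_empty.mpr hd12
    have hD3 : Disjoint (IE K T1 ∪ IE K T2) (IE K T3) :=
      Disjoint.union_left (Set.disjoint_iff_inter_eq_empty.mpr hd13)
        (Set.disjoint_iff_inter_eq_empty.mpr hd23)
    have hcard12 : (IE K T1 ∪ IE K T2).ncard = (IE K T1).ncard + (IE K T2).ncard :=
      Set.ncard_union_eq hD12 (Set.toFinite _) (Set.toFinite _)
    have hcard123 : (IE K T1 ∪ IE K T2 ∪ IE K T3).ncard
        = (IE K T1 ∪ IE K T2).ncard + (IE K T3).ncard :=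
      Set.ncard_union_eq hD3 (Set.toFinite _) (Set.toFinite _)
    set U := T1 ∪ T2 ∪ T3 with hUdef
    have hsubU : IE K T1 ∪ IE K T2 ∪ IE K T3 ⊆ IE K U :=
      Set.union_subset (Set.union_subset
          (IE_mono (Set.subset_union_left.trans Set.subset_union_left))
          (IE_mono (Set.subset_union_right.trans Set.subset_union_left)))
        (IE_mono Set.subset_union_right)
    have heU : (IE K T1).ncard + (IE K T2).ncard + (IE K T3).ncard ≤ (IE K U).ncard := by
      rw [← hcard12, ← hcard123]
      exact Set.ncard_le_ncard hsubU (Set.toFinite _)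
    have hU2 : 2 ≤ U.ncard := le_trans hT1.1
      (Set.ncard_le_ncard (Set.subset_union_left.trans Set.subset_union_left)
        (Set.toFinite _))
    have hspU := hKsparse U hU2
    have hUtight : Tight K U := by
      refine ⟨hU2, le_antisymm hspU ?_⟩
      have h1 := hT1.2
      have h2 := hT2.2
      have h3 := hT3.2
      have ht1 := hT1.1
      have ht2 := hT2.1
      have ht3 := hT3.1
      omega
    exact hno3 U hUtight ⟨Or.inl (Or.inl ha1), Or.inl (Or.inl hb1), Or.inr hc3⟩
  rcases hpair a b hab with ⟨hnadj, hlam⟩ | hbad1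
  · exact ⟨a, b, c, fun x => Iff.rfl, hab, hac.symm, hbc.symm, hnadj, hlam⟩
  rcases hpair a c hac with ⟨hnadj, hlam⟩ | hbad2
  · exact ⟨a, c, b, fun x => by tauto, hac, hab.symm, hbc, hnadj, hlam⟩
  rcases hpair b c hbc with ⟨hnadj, hlam⟩ | hbad3
  · exact ⟨b, c, a, fun x => by tauto, hbc, hab, hac, hnadj, hlam⟩
  exact (hnotall ⟨hbad1, hbad2, hbad3⟩).elim
lemma laman_two {H : SimpleGraph (Fin 2)} (h : H.edgeSet.ncard = 1) : H = ⊤ := by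
  obtain ⟨e, he⟩ := Set.ncard_eq_one.mp h
  induction e with
  | h x y =>
    have hxy : H.Adj x y := H.mem_edgeSet.mp (he ▸ Set.mem_singleton _)
    have key : ∀ x y u w : Fin 2, x ≠ y → u ≠ w → (u = x ∧ w = y) ∨ (u = y ∧ w = x) := by
      decide
    ext u w
    simp only [SimpleGraph.top_adj]
    constructor
    · exact fun h' => h'.ne
    · intro huw
      rcases key x y u w hxy.ne huw with ⟨rfl, rfl⟩ | ⟨rfl, rfl⟩
      · exact hxy
      · exact hxy.symm

def comapIso {m : ℕ} (σ : Fin m ≃ Fin m) (H : SimpleGraph (Fin m)) : H.comap ⇑σ ≃g H :=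
  ⟨σ, Iff.rfl⟩

/-- Every Laman graph is Henneberg: a graph on `n ≥ 2` vertices with `2n − 3` edges in
which every subgraph on `k` vertices has at most `2k − 3` edges can be constructed from
`K₂` by a sequence of Henneberg moves. -/
theorem laman_is_henneberg {n : ℕ} (hn : 2 ≤ n) (H : SimpleGraph (Fin n))
    (hH : IsLaman n H) : Henneberg n H := by
  rw [isLaman_iff] at hH
  induction n, hn using Nat.le_induction with
  | base =>
    rw [laman_two hH.1]
    exact Henneberg.base
  | succ n hn ih =>
    obtain ⟨v, hv2, hv3⟩ := exists_low_degree hn hH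
    set σ := Equiv.swap v (Fin.last n) with hσ
    set G := H.comap ⇑σ with hGdef
    have hGlam : Laman' (n+1) G := laman'_comap σ hH
    have hiso : G ≃g H := comapIso σ H
    have hdeg : (G.neighborSet (Fin.last n)).ncard = (H.neighborSet v).ncard := by
      rw [ncard_neighborSet_comap H σ (Fin.last n), Equiv.swap_apply_right]
    suffices hG : Henneberg (n+1) G from Henneberg.iso hiso hG
    have hKedge := ncard_edgeSet_comap_castSucc G
    have hdec := ncard_edgeSet_decomp G (Fin.last n)
    have hKsparse : Sparse (G.comap (Fin.castSucc : Fin n → Fin (n+1))) :=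
      Sparse.comap (Fin.castSucc_injective n) hGlam.2
    have hGcard := hGlam.1
    have hd23 : (G.neighborSet (Fin.last n)).ncard = 2 ∨
        (G.neighborSet (Fin.last n)).ncard = 3 := by omega
    rcases hd23 with hd | hd
    · -- the last vertex has degree 2
      obtain ⟨u1, u2, hu12, hupair⟩ := Set.ncard_eq_two.mp hd
      have hadj1 : G.Adj (Fin.last n) u1 := by
        rw [← SimpleGraph.mem_neighborSet, hupair]; simp
      have hadj2 : G.Adj (Fin.last n) u2 := by
        rw [← SimpleGraph.mem_neighborSet, hupair]; simp
      obtain ⟨a1, ha1⟩ := Fin.exists_castSucc_eq.mpr hadj1.ne'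
      obtain ⟨a2, ha2⟩ := Fin.exists_castSucc_eq.mpr hadj2.ne'
      have ha12 : a1 ≠ a2 := fun h => hu12 (by rw [← ha1, ← ha2, h])
      have hmem : ∀ x : Fin n,
          G.Adj (Fin.last n) x.castSucc ↔ x ∈ ({a1, a2} : Finset (Fin n)) := by
        intro x
        rw [← SimpleGraph.mem_neighborSet, hupair]
        simp only [Set.mem_insert_iff, Set.mem_singleton_iff, Finset.mem_insert,
          Finset.mem_singleton, ← ha1, ← ha2, Fin.castSucc_inj]
      have hGeq : G = addVertex (G.comap Fin.castSucc) {a1, a2} :=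
        eq_addVertex G {a1, a2} hmem
      have hKlam : Laman' n (G.comap (Fin.castSucc : Fin n → Fin (n+1))) :=
        ⟨by omega, hKsparse⟩
      rw [hGeq]
      exact Henneberg.move1 a1 a2 ha12 (ih _ hKlam)
    · -- the last vertex has degree 3
      obtain ⟨u1, u2, u3, h12, h13, h23, hupair⟩ := Set.ncard_eq_three.mp hd
      have hadj1 : G.Adj (Fin.last n) u1 := by
        rw [← SimpleGraph.mem_neighborSet, hupair]; simp
      have hadj2 : G.Adj (Fin.last n) u2 := by
        rw [← SimpleGraph.mem_neighborSet, hupair]; simp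
      have hadj3 : G.Adj (Fin.last n) u3 := by
        rw [← SimpleGraph.mem_neighborSet, hupair]; simp
      obtain ⟨a, ha⟩ := Fin.exists_castSucc_eq.mpr hadj1.ne'
      obtain ⟨b, hb⟩ := Fin.exists_castSucc_eq.mpr hadj2.ne'
      obtain ⟨c, hc⟩ := Fin.exists_castSucc_eq.mpr hadj3.ne'
      have hab : a ≠ b := fun h => h12 (by rw [← ha, ← hb, h])
      have hac : a ≠ c := fun h => h13 (by rw [← ha, ← hc, h])
      have hbc : b ≠ c := fun h => h23 (by rw [← hb, ← hc, h])
      have hnbrs : G.neighborSet (Fin.last n) = {a.castSucc, b.castSucc, c.castSucc} := by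
        rw [hupair, ha, hb, hc]
      obtain ⟨p, q, r, hmem, hpq, hrp, hrq, hnadj, hLlam⟩ :=
        exists_good_pair hn hGlam hab hac hbc hnbrs
      have hmem' : ∀ x : Fin n,
          G.Adj (Fin.last n) x.castSucc ↔ x ∈ ({p, q, r} : Finset (Fin n)) := by
        intro x
        rw [← SimpleGraph.mem_neighborSet, hnbrs]
        simp only [Set.mem_insert_iff, Set.mem_singleton_iff, Finset.mem_insert,
          Finset.mem_singleton, Fin.castSucc_inj]
        exact (hmem x).symm
      have hGeq : G = addVertex (G.comap Fin.castSucc) {p, q, r} :=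
        eq_addVertex G {p, q, r} hmem'
      have hLadj : ((G.comap (Fin.castSucc : Fin n → Fin (n+1)))
          ⊔ SimpleGraph.fromEdgeSet {s(p, q)}).Adj p q :=
        (SimpleGraph.sup_adj _ _ _ _).mpr (Or.inr ((SimpleGraph.fromEdgeSet_adj _).mpr ⟨rfl, hpq⟩))
      have hmove := Henneberg.move2 p q r hLadj hrp hrq (ih _ hLlam)
      rw [deleteEdges_sup_single hpq hnadj] at hmove
      rw [hGeq]
      exact hmove
end

section
/- If a graph H on vertex set [n] is obtained from a Laman graph H' on a vertex set of size n−1 by a Henneberg move of type 1 (adding a new vertex adjacent to two existing vertices), then H is Laman. -/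
open Finset in
open scoped Classical in
lemma mem_addVertex_edgeSet {n : ℕ} (H : SimpleGraph (Fin n)) (s : Finset (Fin n))
    (e : Sym2 (Fin (n + 1))) :
    e ∈ (addVertex H s).edgeSet ↔
      (∃ e' ∈ H.edgeSet, e = e'.map Fin.castSucc) ∨
      (∃ c ∈ s, e = s(Fin.last n, c.castSucc)) := by
  induction e using Sym2.ind with
  | _ x y =>
    rw [SimpleGraph.mem_edgeSet]
    show (SimpleGraph.fromRel _).Adj x y ↔ _
    rw [SimpleGraph.fromRel_adj]
    constructor
    · rintro ⟨hne, (⟨x', y', rfl, rfl, h⟩ | ⟨rfl, c, hc, rfl⟩) |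
        (⟨y', x', rfl, rfl, h⟩ | ⟨rfl, c, hc, rfl⟩)⟩
      · exact Or.inl ⟨s(x', y'), h, by rw [Sym2.map_pair_eq]⟩
      · exact Or.inr ⟨c, hc, rfl⟩
      · exact Or.inl ⟨s(y', x'), h, by rw [Sym2.map_pair_eq, Sym2.eq_swap]⟩
      · exact Or.inr ⟨c, hc, Sym2.eq_swap⟩
    · rintro (⟨e', he', he⟩ | ⟨c, hc, he⟩)
      · induction e' using Sym2.ind with
        | _ x' y' =>
          have hadj : H.Adj x' y' := he'
          rw [Sym2.map_pair_eq, Sym2.eq_iff] at he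
          rcases he with ⟨rfl, rfl⟩ | ⟨rfl, rfl⟩
          · exact ⟨by simpa [Fin.castSucc_inj] using hadj.ne,
              Or.inl (Or.inl ⟨x', y', rfl, rfl, hadj⟩)⟩
          · exact ⟨by simpa [Fin.castSucc_inj] using hadj.symm.ne,
              Or.inl (Or.inl ⟨y', x', rfl, rfl, hadj.symm⟩)⟩
      · rw [Sym2.eq_iff] at he
        rcases he with ⟨rfl, rfl⟩ | ⟨rfl, rfl⟩
        · exact ⟨(Fin.castSucc_lt_last c).ne', Or.inl (Or.inr ⟨rfl, c, hc, rfl⟩)⟩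
        · exact ⟨(Fin.castSucc_lt_last c).ne, Or.inr (Or.inr ⟨rfl, c, hc, rfl⟩)⟩

open Finset in
open scoped Classical in
lemma edgesWithin_eq_card_filter {n : ℕ} (H : SimpleGraph (Fin n)) (V : Finset (Fin n)) :
    edgesWithin H V =
      (univ.filter (fun e : Sym2 (Fin n) => e ∈ H.edgeSet ∧ ∀ v ∈ e, v ∈ V)).card := by
  rw [edgesWithin, Nat.card_eq_fintype_card]
  convert Fintype.card_subtype _

open Finset in
lemma image_preimage_castSucc {n : ℕ} (V : Finset (Fin (n + 1))) :
    (V.preimage Fin.castSucc (Fin.castSucc_injective n).injOn).image Fin.castSucc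
      = V.erase (Fin.last n) := by
  ext x
  simp only [mem_image, mem_preimage, mem_erase]
  constructor
  · rintro ⟨y, hy, rfl⟩; exact ⟨(Fin.castSucc_lt_last y).ne, hy⟩
  · rintro ⟨hne, hx⟩
    obtain ⟨y, rfl⟩ := Fin.exists_castSucc_eq.mpr hne
    exact ⟨y, hx, rfl⟩

open Finset in
open scoped Classical in
lemma edgesWithin_addVertex {n : ℕ} (H : SimpleGraph (Fin n)) (a b : Fin n)
    (V : Finset (Fin (n + 1))) :
    edgesWithin (addVertex H {a, b}) V =
      edgesWithin H (V.preimage Fin.castSucc (Fin.castSucc_injective n).injOn) +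
      (({a, b} : Finset (Fin n)).filter
        (fun c => Fin.last n ∈ V ∧ c.castSucc ∈ V)).card := by
  set V' := V.preimage Fin.castSucc (Fin.castSucc_injective n).injOn with hV'
  rw [edgesWithin_eq_card_filter, edgesWithin_eq_card_filter]
  set B := (univ.filter (fun e : Sym2 (Fin n) => e ∈ H.edgeSet ∧ ∀ v ∈ e, v ∈ V')).image
    (Sym2.map Fin.castSucc) with hB
  set C := (({a, b} : Finset (Fin n)).filter
    (fun c => Fin.last n ∈ V ∧ c.castSucc ∈ V)).image
      (fun c => s(Fin.last n, c.castSucc)) with hC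
  have hmain : (univ.filter (fun e : Sym2 (Fin (n + 1)) =>
      e ∈ (addVertex H {a, b}).edgeSet ∧ ∀ v ∈ e, v ∈ V)) = B ∪ C := by
    ext e
    simp only [mem_filter, mem_univ, true_and, mem_union, hB, hC, mem_image,
      mem_addVertex_edgeSet]
    constructor
    · rintro ⟨(⟨e', he', rfl⟩ | ⟨c, hc, rfl⟩), hv⟩
      · refine Or.inl ⟨e', ⟨he', ?_⟩, rfl⟩
        induction e' using Sym2.ind with
        | _ x' y' =>
          intro v hv'
          rw [Sym2.mem_iff] at hv'
          have h1 : x'.castSucc ∈ V := hv _ (by simp [Sym2.map_pair_eq])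
          have h2 : y'.castSucc ∈ V := hv _ (by simp [Sym2.map_pair_eq])
          rcases hv' with rfl | rfl
          · simpa [hV', mem_preimage] using h1
          · simpa [hV', mem_preimage] using h2
      · exact Or.inr ⟨c, ⟨hc, hv _ (by simp), hv _ (by simp)⟩, rfl⟩
    · rintro (⟨e', ⟨he', hv⟩, rfl⟩ | ⟨c, ⟨hc, hl, hcs⟩, rfl⟩)
      · refine ⟨Or.inl ⟨e', he', rfl⟩, ?_⟩
        induction e' using Sym2.ind with
        | _ x' y' =>
          intro v hv'
          rw [Sym2.map_pair_eq, Sym2.mem_iff] at hv'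
          rcases hv' with rfl | rfl
          · simpa [hV', mem_preimage] using hv x' (by simp)
          · simpa [hV', mem_preimage] using hv y' (by simp)
      · refine ⟨Or.inr ⟨c, hc, rfl⟩, ?_⟩
        intro v hv'
        rw [Sym2.mem_iff] at hv'
        rcases hv' with rfl | rfl <;> assumption
  have hdisj : Disjoint B C := by
    rw [Finset.disjoint_left]
    rintro e heB heC
    rw [hB, mem_image] at heB
    rw [hC, mem_image] at heC
    obtain ⟨e', _, rfl⟩ := heB
    obtain ⟨c, _, hce⟩ := heC
    have hlast : Fin.last n ∈ Sym2.map Fin.castSucc e' := by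
      rw [← hce]; simp
    rw [Sym2.mem_map] at hlast
    obtain ⟨w, _, hw⟩ := hlast
    exact (Fin.castSucc_lt_last w).ne hw
  rw [hmain, card_union_of_disjoint hdisj]
  congr 1
  · exact card_image_of_injective _ (Sym2.map.injective (Fin.castSucc_injective n))
  · apply card_image_of_injective
    intro c c' h
    rw [Sym2.eq_iff] at h
    rcases h with ⟨-, h⟩ | ⟨h, -⟩
    · exact Fin.castSucc_injective n h
    · exact absurd h.symm (Fin.castSucc_lt_last c').ne

/-- A Henneberg move of type 1 (adding a new vertex adjacent to two existing distinct
vertices) applied to a Laman graph yields a Laman graph. -/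
theorem henneberg_move1_laman {n : ℕ} (hn : 2 ≤ n) (H' : SimpleGraph (Fin n))
    (hH' : IsLaman n H') (a b : Fin n) (hab : a ≠ b) :
    IsLaman (n + 1) (addVertex H' {a, b}) := by
  classical
  obtain ⟨hcard, hsub⟩ := hH'
  -- Nat.card edgeSet = edgesWithin _ univ
  have hcard_eq : ∀ (m : ℕ) (G : SimpleGraph (Fin m)),
      Nat.card G.edgeSet = edgesWithin G Finset.univ := by
    intro m G
    rw [edgesWithin]
    exact Nat.card_congr (Equiv.subtypeEquivRight (by simp))
  -- card of preimage
  have hpre : ∀ V : Finset (Fin (n + 1)),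
      (V.preimage Fin.castSucc (Fin.castSucc_injective n).injOn).card
        = (V.erase (Fin.last n)).card := by
    intro V
    rw [← image_preimage_castSucc V,
      Finset.card_image_of_injective _ (Fin.castSucc_injective n)]
  constructor
  · rw [hcard_eq, edgesWithin_addVertex]
    have h1 : (Finset.univ.preimage Fin.castSucc (Fin.castSucc_injective n).injOn)
        = (Finset.univ : Finset (Fin n)) := by
      ext x; simp
    have h2 : (({a, b} : Finset (Fin n)).filter
        (fun c => Fin.last n ∈ (Finset.univ : Finset (Fin (n+1))) ∧
          c.castSucc ∈ (Finset.univ : Finset (Fin (n+1))))) = {a, b} := by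
      apply Finset.filter_true_of_mem; simp
    rw [h1, h2, ← hcard_eq, hcard, Finset.card_insert_of_notMem (by simpa using hab),
      Finset.card_singleton]
    omega
  · intro V hV
    rw [edgesWithin_addVertex]
    set V' := V.preimage Fin.castSucc (Fin.castSucc_injective n).injOn with hV'def
    have hfilter_le : (({a, b} : Finset (Fin n)).filter
        (fun c => Fin.last n ∈ V ∧ c.castSucc ∈ V)).card ≤ 2 := by
      calc _ ≤ ({a, b} : Finset (Fin n)).card := Finset.card_filter_le _ _
        _ ≤ 2 := Finset.card_insert_le _ _ |>.trans (by simp)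
    by_cases hlast : Fin.last n ∈ V
    · have hVcard : V'.card = V.card - 1 := by
        rw [hpre, Finset.card_erase_of_mem hlast]
      by_cases hV2 : 2 ≤ V'.card
      · have := hsub V' hV2
        omega
      · -- V'.card ≤ 1 : no internal edges, and extra edges ≤ V'.card
        have hzero : edgesWithin H' V' = 0 := by
          rw [edgesWithin_eq_card_filter, Finset.card_eq_zero, Finset.filter_eq_empty_iff]
          rintro e -
          induction e using Sym2.ind with
          | _ x y =>
            rintro ⟨hadj, hv⟩
            have hx : x ∈ V' := hv x (by simp)
            have hy : y ∈ V' := hv y (by simp)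
            have hne : x ≠ y := (H'.mem_edgeSet.mp hadj).ne
            have : 2 ≤ V'.card := Finset.one_lt_card.mpr ⟨x, hx, y, hy, hne⟩
            omega
        have hfle : (({a, b} : Finset (Fin n)).filter
            (fun c => Fin.last n ∈ V ∧ c.castSucc ∈ V)).card ≤ V'.card := by
          apply Finset.card_le_card
          intro c hc
          rw [Finset.mem_filter] at hc
          rw [hV'def, Finset.mem_preimage]
          exact hc.2.2
        omega
    · -- last ∉ V : no extra edges, V' has same card as V
      have hVcard : V'.card = V.card := by
        rw [hpre, Finset.erase_eq_of_notMem hlast]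
      have hf0 : (({a, b} : Finset (Fin n)).filter
          (fun c => Fin.last n ∈ V ∧ c.castSucc ∈ V)).card = 0 := by
        rw [Finset.card_eq_zero, Finset.filter_eq_empty_iff]
        rintro c - ⟨h, -⟩
        exact hlast h
      have := hsub V' (by omega)
      omega
end

section
/- If H is a graph on vertex set [n] that is not Laman, then for every pair of rooted trees T₁, T₂ on leaf set [n], the restricted clade graph G^H_{T₁,T₂} is not a tree (it either has the wrong number of edges or contains a cycle). -/
/-- The restricted clade graph `G^H_{T₁,T₂}` (with parallel edges collapsed): `A` on the
`T₁` side is adjacent to `B` on the `T₂` side iff some edge `{i,j}` of `H` has `A` as its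
minimal `T₁`-clade and `B` as its minimal `T₂`-clade. -/
def rCladeGraph {n : ℕ} (H : SimpleGraph (Fin n)) (F₁ F₂ : Finset (Finset (Fin n))) :
    SimpleGraph (CladeVert F₁ F₂) :=
  SimpleGraph.fromRel (fun x y => ∃ i j : Fin n, i ≠ j ∧ H.Adj i j ∧
    ∃ (hA : mca F₁ i j ∈ nsClades F₁) (hB : mca F₂ i j ∈ nsClades F₂),
      x = Sum.inl ⟨mca F₁ i j, hA⟩ ∧ y = Sum.inr ⟨mca F₂ i j, hB⟩)

/-- The restricted clade graph (as a multigraph, with one edge per edge of `H`) is a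
tree: it is connected, has `2n − 2` vertices, and has `2n − 3` edges. -/
def RCladeGraphIsTree {n : ℕ} (H : SimpleGraph (Fin n))
    (F₁ F₂ : Finset (Finset (Fin n))) : Prop :=
  (rCladeGraph H F₁ F₂).Connected ∧
  Nat.card (CladeVert F₁ F₂) = 2 * n - 2 ∧
  Nat.card H.edgeSet = 2 * n - 3

namespace NLNT

variable {V : Type*}


variable {V : Type*}

lemma dist_getVert_le {G : SimpleGraph V} (hc : G.Connected) {u v : V} (p : G.Walk u v) (i : ℕ) :
    G.dist u (p.getVert i) ≤ i := by
  induction p generalizing i with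
  | nil =>
    rw [SimpleGraph.Walk.getVert_of_length_le _ (by simp), SimpleGraph.dist_self]
    exact Nat.zero_le i
  | @cons a b c h q ih =>
    cases i with
    | zero => simp
    | succ i =>
      rw [SimpleGraph.Walk.getVert_cons_succ]
      have h1 : G.dist a b = 1 := by
        rw [SimpleGraph.dist_eq_one_iff_adj]; exact h
      calc G.dist a (q.getVert i) ≤ G.dist a b + G.dist b (q.getVert i) := hc.dist_triangle
        _ ≤ 1 + i := by rw [h1]; exact Nat.add_le_add_left (ih i) 1
        _ = i + 1 := by omega

lemma card_le_of_connected [Fintype V] [DecidableEq V] {G : SimpleGraph V}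
    (hc : G.Connected) : Fintype.card V ≤ Nat.card G.edgeSet + 1 := by
  classical
  obtain ⟨r⟩ := hc.nonempty
  have key : ∀ v : V, v ≠ r → ∃ x : V, G.Adj x v ∧ G.dist r x + 1 = G.dist r v := by
    intro v hv
    obtain ⟨p, hp, hlen⟩ := hc.exists_path_of_dist r v
    have hd : 0 < G.dist r v := hc.pos_dist_of_ne (Ne.symm hv)
    refine ⟨p.getVert (G.dist r v - 1), ?_, ?_⟩
    · have h1 : G.dist r v - 1 < p.length := by omega
      have := p.adj_getVert_succ h1
      have h2 : G.dist r v - 1 + 1 = p.length := by omega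
      rw [h2, SimpleGraph.Walk.getVert_length] at this
      exact this
    · have hle : G.dist r (p.getVert (G.dist r v - 1)) ≤ G.dist r v - 1 :=
        dist_getVert_le hc p _
      have hge : G.dist r v ≤ G.dist r (p.getVert (G.dist r v - 1)) + 1 := by
        have hadj : G.Adj (p.getVert (G.dist r v - 1)) v := by
          have h1 : G.dist r v - 1 < p.length := by omega
          have := p.adj_getVert_succ h1
          have h2 : G.dist r v - 1 + 1 = p.length := by omega
          rw [h2, SimpleGraph.Walk.getVert_length] at this
          exact this
        have h1 : G.dist (p.getVert (G.dist r v - 1)) v = 1 := by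
          rw [SimpleGraph.dist_eq_one_iff_adj]; exact hadj
        calc G.dist r v ≤ G.dist r _ + G.dist _ v := hc.dist_triangle
          _ = G.dist r _ + 1 := by rw [h1]
      omega
  choose x hxadj hxdist using key
  haveI : Fintype G.edgeSet := Fintype.ofFinite _
  have hinj : ∀ a ∈ Finset.univ.erase r, ∀ b ∈ Finset.univ.erase r,
      (fun v => if h : v ≠ r then s(x v h, v) else s(r, r)) a =
      (fun v => if h : v ≠ r then s(x v h, v) else s(r, r)) b → a = b := by
    intro a ha b hb hfab
    have ha' : a ≠ r := (Finset.mem_erase.mp ha).1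
    have hb' : b ≠ r := (Finset.mem_erase.mp hb).1
    simp only [dif_pos ha', dif_pos hb'] at hfab
    rw [Sym2.eq_iff] at hfab
    rcases hfab with ⟨-, h2⟩ | ⟨h1, h2⟩
    · exact h2
    · exfalso
      have d1 := hxdist a ha'
      have d2 := hxdist b hb'
      rw [h1] at d1; rw [← h2] at d2
      omega
  have hmaps : ∀ a ∈ Finset.univ.erase r,
      (fun v => if h : v ≠ r then s(x v h, v) else s(r, r)) a ∈ G.edgeFinset := by
    intro a ha
    have ha' : a ≠ r := (Finset.mem_erase.mp ha).1
    simp only [dif_pos ha', SimpleGraph.mem_edgeFinset, SimpleGraph.mem_edgeSet]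
    exact hxadj a ha'
  have hcard := Finset.card_le_card_of_injOn _ hmaps hinj
  rw [Finset.card_erase_of_mem (Finset.mem_univ r), Finset.card_univ] at hcard
  have : G.edgeFinset.card = Nat.card G.edgeSet := by
    rw [SimpleGraph.edgeFinset_card, Nat.card_eq_fintype_card]
  omega

lemma concat_isPath {G : SimpleGraph V} {u v w : V} {q : G.Walk u v} (hq : q.IsPath)
    (h : G.Adj v w) (hw : w ∉ q.support) : (q.concat h).IsPath := by
  have heq : q.concat h = (SimpleGraph.Walk.cons h.symm q.reverse).reverse := by
    rw [SimpleGraph.Walk.reverse_cons, SimpleGraph.Walk.reverse_reverse,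
      SimpleGraph.Walk.concat_eq_append]
  rw [heq]
  apply SimpleGraph.Walk.IsPath.reverse
  apply SimpleGraph.Walk.IsPath.cons hq.reverse
  rwa [SimpleGraph.Walk.support_reverse, List.mem_reverse]

lemma no_two_up {G : SimpleGraph V} (hc : G.Connected) (ha : G.IsAcyclic)
    (r : V) {a x y : V} (hx : G.Adj x a) (hy : G.Adj y a) (hxy : x ≠ y)
    (hdx : G.dist r x < G.dist r a) (hdy : G.dist r y < G.dist r a) : False := by
  obtain ⟨q₁, hq₁, hl₁⟩ := hc.exists_path_of_dist r x
  obtain ⟨q₂, hq₂, hl₂⟩ := hc.exists_path_of_dist r y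
  have hna₁ : a ∉ q₁.support := by
    rw [SimpleGraph.Walk.mem_support_iff_exists_getVert]
    rintro ⟨i, hgi, hil⟩
    have := dist_getVert_le hc q₁ i
    rw [hgi] at this
    omega
  have hna₂ : a ∉ q₂.support := by
    rw [SimpleGraph.Walk.mem_support_iff_exists_getVert]
    rintro ⟨i, hgi, hil⟩
    have := dist_getVert_le hc q₂ i
    rw [hgi] at this
    omega
  have hw₁ : (q₁.concat hx).IsPath := concat_isPath hq₁ hx hna₁
  have hw₂ : (q₂.concat hy).IsPath := concat_isPath hq₂ hy hna₂
  have hpu := ha.path_unique ⟨q₁.concat hx, hw₁⟩ ⟨q₂.concat hy, hw₂⟩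
  have heq : q₁.concat hx = q₂.concat hy := congrArg Subtype.val hpu
  obtain ⟨hv, -⟩ := SimpleGraph.Walk.concat_inj heq
  exact hxy hv

lemma dist_ne_of_adj {G : SimpleGraph V} (hc : G.Connected) (ha : G.IsAcyclic)
    (r : V) {a b : V} (hab : G.Adj a b) : G.dist r a ≠ G.dist r b := by
  intro heq
  obtain ⟨q, hq, hl⟩ := hc.exists_path_of_dist r a
  have hb : b ∉ q.support := by
    rw [SimpleGraph.Walk.mem_support_iff_exists_getVert]
    rintro ⟨i, hgi, hil⟩
    have hle := dist_getVert_le hc q i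
    rw [hgi] at hle
    have : i = q.length := by omega
    rw [this, SimpleGraph.Walk.getVert_length] at hgi
    exact hab.ne hgi
  have hw : (q.concat hab).IsPath := concat_isPath hq hab hb
  obtain ⟨p₂, hp₂, hl₂⟩ := hc.exists_path_of_dist r b
  have hpu := ha.path_unique ⟨q.concat hab, hw⟩ ⟨p₂, hp₂⟩
  have heq2 : q.concat hab = p₂ := congrArg Subtype.val hpu
  have : (q.concat hab).length = p₂.length := by rw [heq2]
  rw [SimpleGraph.Walk.length_concat] at this
  omega

lemma forest_edge_bound [Fintype V] [DecidableEq V] {G : SimpleGraph V}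
    (hc : G.Connected) (ha : G.IsAcyclic) (E : Finset (Sym2 V)) (W : Finset V)
    (hE : ∀ e ∈ E, e ∈ G.edgeSet) (hW : ∀ e ∈ E, ∀ x ∈ e, x ∈ W) :
    E.card ≤ W.card - 1 := by
  classical
  rcases E.eq_empty_or_nonempty with rfl | hEne
  · simp
  obtain ⟨e₀, he₀⟩ := hEne
  have hWne : W.Nonempty := by
    revert he₀
    induction e₀ with
    | _ a b => exact fun he₀ => ⟨a, hW _ he₀ a (Sym2.mem_mk_left a b)⟩
  obtain ⟨r⟩ := hc.nonempty
  obtain ⟨w₀, hw₀W, hw₀min⟩ := W.exists_min_image (fun v => G.dist r v) hWne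
  have hfar : ∀ e ∈ E, ∃ v, v ∈ e ∧ ∀ u ∈ e, u ≠ v → G.dist r u < G.dist r v := by
    intro e he
    induction e with
    | _ a b =>
      have hadj : G.Adj a b := (G.mem_edgeSet).mp (hE _ he)
      have hne := dist_ne_of_adj hc ha r hadj
      rcases lt_or_gt_of_ne hne with h | h
      · refine ⟨b, Sym2.mem_mk_right a b, ?_⟩
        intro u hu hub
        rcases Sym2.mem_iff.mp hu with rfl | rfl
        · exact h
        · exact absurd rfl hub
      · refine ⟨a, Sym2.mem_mk_left a b, ?_⟩
        intro u hu hua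
        rcases Sym2.mem_iff.mp hu with rfl | rfl
        · exact absurd rfl hua
        · exact h
  choose f hf₁ hf₂ using hfar
  have hmaps : ∀ (e : Sym2 V) (he : e ∈ E), f e he ∈ W.erase w₀ := by
    intro e he
    rw [Finset.mem_erase]
    constructor
    · intro hfe
      have hnd : ¬ e.IsDiag := G.not_isDiag_of_mem_edgeSet (hE e he)
      have hmem := hf₁ e he
      have hx := Sym2.other_mem hmem
      have hxne : Sym2.Mem.other hmem ≠ f e he := Sym2.other_ne hnd hmem
      have hlt := hf₂ e he _ hx hxne
      have hxW : Sym2.Mem.other hmem ∈ W := hW e he _ hx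
      have h1 := hw₀min _ hxW
      have h2 : G.dist r w₀ = G.dist r (f e he) := congrArg (G.dist r) hfe.symm
      omega
    · exact hW e he _ (hf₁ e he)
  have hinj : ∀ (e₁ : Sym2 V) (he₁ : e₁ ∈ E) (e₂ : Sym2 V) (he₂ : e₂ ∈ E),
      f e₁ he₁ = f e₂ he₂ → e₁ = e₂ := by
    intro e₁ he₁ e₂ he₂ hfeq
    by_contra hne
    have hmem₁ := hf₁ e₁ he₁
    have hmem₂ : f e₁ he₁ ∈ e₂ := by rw [hfeq]; exact hf₁ e₂ he₂
    have hnd₁ : ¬ e₁.IsDiag := G.not_isDiag_of_mem_edgeSet (hE e₁ he₁)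
    have hnd₂ : ¬ e₂.IsDiag := G.not_isDiag_of_mem_edgeSet (hE e₂ he₂)
    have hsp₁ : s(f e₁ he₁, Sym2.Mem.other hmem₁) = e₁ := Sym2.other_spec hmem₁
    have hsp₂ : s(f e₁ he₁, Sym2.Mem.other hmem₂) = e₂ := Sym2.other_spec hmem₂
    have hxa : Sym2.Mem.other hmem₁ ≠ f e₁ he₁ := Sym2.other_ne hnd₁ hmem₁
    have hya : Sym2.Mem.other hmem₂ ≠ f e₁ he₁ := Sym2.other_ne hnd₂ hmem₂
    have hxy : Sym2.Mem.other hmem₁ ≠ Sym2.Mem.other hmem₂ := by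
      intro hxyeq
      apply hne
      rw [← hsp₁, ← hsp₂, hxyeq]
    have hadjx : G.Adj (Sym2.Mem.other hmem₁) (f e₁ he₁) := by
      have : s(f e₁ he₁, Sym2.Mem.other hmem₁) ∈ G.edgeSet := by
        rw [hsp₁]; exact hE e₁ he₁
      exact (G.mem_edgeSet.mp this).symm
    have hadjy : G.Adj (Sym2.Mem.other hmem₂) (f e₁ he₁) := by
      have : s(f e₁ he₁, Sym2.Mem.other hmem₂) ∈ G.edgeSet := by
        rw [hsp₂]; exact hE e₂ he₂
      exact (G.mem_edgeSet.mp this).symm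
    have hdx : G.dist r (Sym2.Mem.other hmem₁) < G.dist r (f e₁ he₁) :=
      hf₂ e₁ he₁ _ (Sym2.other_mem hmem₁) hxa
    have hdy : G.dist r (Sym2.Mem.other hmem₂) < G.dist r (f e₁ he₁) := by
      have h := hf₂ e₂ he₂ _ (Sym2.other_mem hmem₂) (by rw [← hfeq]; exact hya)
      have heqd : G.dist r (f e₂ he₂) = G.dist r (f e₁ he₁) := congrArg _ hfeq.symm
      omega
    exact no_two_up hc ha r hadjx hadjy hxy hdx hdy
  have : E.attach.card ≤ (W.erase w₀).card := by
    apply Finset.card_le_card_of_injOn (fun e => f e.1 e.2)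
    · intro e _; exact hmaps e.1 e.2
    · intro e₁ _ e₂ _ h
      exact Subtype.ext (hinj e₁.1 e₁.2 e₂.1 e₂.2 h)
  rw [Finset.card_attach] at this
  rw [Finset.card_erase_of_mem hw₀W] at this
  exact this

lemma reachable_transfer {G G' : SimpleGraph V}
    (h : ∀ a b, G.Adj a b → G'.Reachable a b) {u v : V} (hr : G.Reachable u v) :
    G'.Reachable u v := by
  obtain ⟨p⟩ := hr
  induction p with
  | nil => exact SimpleGraph.Reachable.refl _
  | cons hadj q ih => exact (h _ _ hadj).trans ih

lemma isAcyclic_of_card [Fintype V] [DecidableEq V] {G : SimpleGraph V}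
    (hc : G.Connected) (hcard : Nat.card G.edgeSet + 1 ≤ Fintype.card V) : G.IsAcyclic := by
  classical
  rw [SimpleGraph.isAcyclic_iff_forall_adj_isBridge]
  intro v w hadj
  by_contra hbr
  rw [SimpleGraph.isBridge_iff] at hbr
  push_neg at hbr
  have hreach : (G \ SimpleGraph.fromEdgeSet {s(v, w)}).Reachable v w := hbr
  set G' := G \ SimpleGraph.fromEdgeSet {s(v, w)} with hG'
  have hconn' : G'.Connected := by
    rw [SimpleGraph.connected_iff]
    refine ⟨?_, hc.nonempty⟩
    intro a b
    apply reachable_transfer _ (hc a b)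
    intro a b hab
    by_cases heq : s(a, b) = s(v, w)
    · rw [Sym2.eq_iff] at heq
      rcases heq with ⟨rfl, rfl⟩ | ⟨rfl, rfl⟩
      · exact hreach
      · exact hreach.symm
    · apply SimpleGraph.Adj.reachable
      rw [hG']
      simp only [SimpleGraph.sdiff_adj, SimpleGraph.fromEdgeSet_adj]
      exact ⟨hab, fun h => heq h.1⟩
  have hcard' := card_le_of_connected hconn'
  have hedge : G'.edgeSet = G.edgeSet \ {s(v, w)} := by
    rw [hG']
    rw [SimpleGraph.edgeSet_sdiff, SimpleGraph.edgeSet_fromEdgeSet,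
      SimpleGraph.edgeSet_sdiff_sdiff_isDiag]
  have hmem : s(v, w) ∈ G.edgeSet := G.mem_edgeSet.mpr hadj
  have hcc : Nat.card G'.edgeSet = Nat.card G.edgeSet - 1 := by
    rw [hedge]
    rw [Nat.card_coe_set_eq, Nat.card_coe_set_eq]
    rw [Set.ncard_diff_singleton_of_mem hmem]
  have hpos : 0 < Nat.card G.edgeSet := by
    rw [Nat.card_coe_set_eq]
    exact (Set.ncard_pos (Set.toFinite _)).mpr ⟨_, hmem⟩
  omega


end NLNT

namespace NLNT


lemma mca_comm {n : ℕ} (F : Finset (Finset (Fin n))) (u v : Fin n) :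
    mca F u v = mca F v u := by
  unfold mca
  congr 1
  apply Finset.filter_congr
  intro A _
  exact and_comm

lemma mca_spec {n : ℕ} {F : Finset (Finset (Fin n))} (hF : IsCladeFamily F) (u v : Fin n) :
    mca F u v ∈ F ∧ u ∈ mca F u v ∧ v ∈ mca F u v ∧
      ∀ A ∈ F, u ∈ A → v ∈ A → mca F u v ⊆ A := by
  classical
  set S := F.filter (fun A => u ∈ A ∧ v ∈ A) with hS
  have huniv : Finset.univ ∈ S := by
    rw [hS, Finset.mem_filter]
    exact ⟨hF.1, Finset.mem_univ u, Finset.mem_univ v⟩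
  obtain ⟨M, hM, hmin⟩ := S.exists_minimal ⟨_, huniv⟩
  have hMS := Finset.mem_filter.mp hM
  have hMF : M ∈ F := hMS.1
  have hMu : u ∈ M := hMS.2.1
  have hMv : v ∈ M := hMS.2.2
  have hsub : ∀ A ∈ S, M ⊆ A := by
    intro A hA
    have hAS := Finset.mem_filter.mp hA
    rcases hF.2.2 M hMF A hAS.1 with h | h | h
    · exact h
    · rcases eq_or_ne A M with rfl | hne
      · exact subset_rfl
      · exact absurd (hmin hA h) (fun h' => hne (Finset.Subset.antisymm h h'))
    · exact absurd hAS.2.1 (Finset.disjoint_left.mp h hMu)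
  have hmca : mca F u v = M := by
    apply le_antisymm
    · exact Finset.inf_le hM
    · exact Finset.le_inf hsub
  rw [hmca]
  refine ⟨hMF, hMu, hMv, ?_⟩
  intro A hA hAu hAv
  exact hsub A (Finset.mem_filter.mpr ⟨hA, hAu, hAv⟩)

lemma mca_mem_nsClades {n : ℕ} {F : Finset (Finset (Fin n))} (hF : IsCladeFamily F)
    {u v : Fin n} (huv : u ≠ v) : mca F u v ∈ nsClades F := by
  obtain ⟨h1, h2, h3, -⟩ := mca_spec hF u v
  rw [nsClades, Finset.mem_filter]
  refine ⟨h1, ?_⟩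
  have : ({u, v} : Finset (Fin n)) ⊆ mca F u v := by
    intro x hx
    rcases Finset.mem_insert.mp hx with rfl | hx
    · exact h2
    · rw [Finset.mem_singleton.mp hx]; exact h3
  calc 2 = ({u, v} : Finset (Fin n)).card := by rw [Finset.card_insert_of_notMem (by simpa), Finset.card_singleton]
    _ ≤ _ := Finset.card_le_card this

lemma laminar_bound {α : Type*} [DecidableEq α] (N : ℕ) :
    ∀ (V : Finset α), V.card ≤ N → ∀ (T : Finset (Finset α)),
      (∀ A ∈ T, A ⊆ V) → (∀ A ∈ T, 2 ≤ A.card) →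
      (∀ A ∈ T, ∀ B ∈ T, A ⊆ B ∨ B ⊆ A ∨ Disjoint A B) →
      T.card ≤ V.card - 1 := by
  induction N with
  | zero =>
    intro V hV T hsub hcard _
    rcases T.eq_empty_or_nonempty with rfl | ⟨A, hA⟩
    · simp
    · exfalso
      have := Finset.card_le_card (hsub A hA)
      have := hcard A hA
      omega
  | succ N ih =>
    intro V hV T hsub hcard hlam
    rcases T.eq_empty_or_nonempty with rfl | hTne
    · simp
    obtain ⟨M, hM, hMmin⟩ := T.exists_minimal hTne
    have hM2 : 2 ≤ M.card := hcard M hM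
    have hMV : M ⊆ V := hsub M hM
    have hMVc : M.card ≤ V.card := Finset.card_le_card hMV
    obtain ⟨x, hxM⟩ : M.Nonempty := Finset.card_pos.mp (by omega)
    have hrel : ∀ A ∈ T, A ≠ M → (M ⊆ A ∧ M ≠ A) ∨ Disjoint M A := by
      intro A hA hAM
      rcases hlam A hA M hM with h | h | h
      · rcases eq_or_ne A M with rfl | hne
        · exact absurd rfl hAM
        · exact absurd (hMmin hA h) (fun h' => hne (Finset.Subset.antisymm h h'))
      · exact Or.inl ⟨h, fun he => hAM he.symm⟩
      · exact Or.inr h.symm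
    set V' := (V \ M) ∪ {x} with hV'
    set g := fun A : Finset α => if M ⊆ A then (A \ M) ∪ {x} else A with hg
    set T' := (T.erase M).image g with hT'
    have hxV' : x ∈ V' := by simp [hV']
    have hV'card : V'.card = V.card - M.card + 1 := by
      rw [hV']
      rw [Finset.card_union_of_disjoint (by simp [Finset.disjoint_singleton_right, hxM])]
      rw [Finset.card_sdiff_of_subset hMV, Finset.card_singleton]
    have hnotsub : ∀ B, Disjoint M B → ¬ M ⊆ B := fun B hD hs =>
      (Finset.disjoint_left.mp hD hxM) (hs hxM)
    have hgd : ∀ A, M ⊆ A → g A = (A \ M) ∪ {x} := by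
      intro A h; rw [hg]; simp only [if_pos h]
    have hgd' : ∀ A, Disjoint M A → g A = A := by
      intro A h; rw [hg]; simp only [if_neg (hnotsub A h)]
    have hxg : ∀ A, M ⊆ A → x ∈ g A := by
      intro A h; rw [hgd A h]; simp
    have hginj : ∀ A ∈ T.erase M, ∀ B ∈ T.erase M, g A = g B → A = B := by
      intro A hA B hB hgAB
      have hAe := Finset.mem_erase.mp hA
      have hBe := Finset.mem_erase.mp hB
      rcases hrel A hAe.2 hAe.1 with ⟨hMA, -⟩ | hDA <;>
        rcases hrel B hBe.2 hBe.1 with ⟨hMB, -⟩ | hDB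
      · rw [hgd A hMA, hgd B hMB] at hgAB
        have hxA : x ∉ A \ M := by simp [hxM]
        have hxB : x ∉ B \ M := by simp [hxM]
        have hABM : A \ M = B \ M := by
          have h2 := congrArg (fun s => Finset.erase s x) hgAB
          simpa [Finset.erase_union_distrib, Finset.erase_eq_of_notMem hxA,
            Finset.erase_eq_of_notMem hxB, Finset.erase_singleton] using h2
        have hA' : (A \ M) ∪ M = A := Finset.sdiff_union_of_subset hMA
        have hB' : (B \ M) ∪ M = B := Finset.sdiff_union_of_subset hMB
        rw [← hA', ← hB', hABM]
      · exfalso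
        have : x ∈ B := by
          rw [← hgd' B hDB, ← hgAB]
          exact hxg A hMA
        exact (Finset.disjoint_left.mp hDB hxM) this
      · exfalso
        have : x ∈ A := by
          rw [← hgd' A hDA, hgAB]
          exact hxg B hMB
        exact (Finset.disjoint_left.mp hDA hxM) this
      · rw [hgd' A hDA, hgd' B hDB] at hgAB
        exact hgAB
    have hT'card : T'.card = T.card - 1 := by
      rw [hT', Finset.card_image_of_injOn (fun A hA B hB => hginj A hA B hB),
        Finset.card_erase_of_mem hM]
    -- T' properties for ih
    have hsub' : ∀ A ∈ T', A ⊆ V' := by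
      intro A' hA'
      obtain ⟨A, hA, rfl⟩ := Finset.mem_image.mp hA'
      have hAe := Finset.mem_erase.mp hA
      have hAV := hsub A hAe.2
      rcases hrel A hAe.2 hAe.1 with ⟨hMA, -⟩ | hDA
      · rw [hgd A hMA, hV']
        apply Finset.union_subset_union _ subset_rfl
        exact Finset.sdiff_subset_sdiff hAV subset_rfl
      · rw [hgd' A hDA, hV']
        refine subset_trans ?_ Finset.subset_union_left
        intro y hy
        exact Finset.mem_sdiff.mpr ⟨hAV hy, Finset.disjoint_right.mp hDA hy⟩
    have hcard' : ∀ A ∈ T', 2 ≤ A.card := by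
      intro A' hA'
      obtain ⟨A, hA, rfl⟩ := Finset.mem_image.mp hA'
      have hAe := Finset.mem_erase.mp hA
      rcases hrel A hAe.2 hAe.1 with ⟨hMA, hMAne⟩ | hDA
      · rw [hgd A hMA]
        have hxA : x ∉ A \ M := by simp [hxM]
        rw [Finset.card_union_of_disjoint (by simp [Finset.disjoint_singleton_right, hxA])]
        rw [Finset.card_sdiff_of_subset hMA, Finset.card_singleton]
        have : M.card < A.card :=
          Finset.card_lt_card (ssubset_of_subset_of_ne hMA hMAne)
        omega
      · rw [hgd' A hDA]
        exact hcard A hAe.2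
    have hlam' : ∀ A ∈ T', ∀ B ∈ T', A ⊆ B ∨ B ⊆ A ∨ Disjoint A B := by
      intro A' hA' B' hB'
      obtain ⟨A, hA, rfl⟩ := Finset.mem_image.mp hA'
      obtain ⟨B, hB, rfl⟩ := Finset.mem_image.mp hB'
      have hAe := Finset.mem_erase.mp hA
      have hBe := Finset.mem_erase.mp hB
      have main : ∀ C D : Finset α, C ∈ T.erase M → D ∈ T.erase M → C ⊆ D →
          g C ⊆ g D := by
        intro C D hC hD hCD
        have hCe := Finset.mem_erase.mp hC
        have hDe := Finset.mem_erase.mp hD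
        rcases hrel C hCe.2 hCe.1 with ⟨hMC, -⟩ | hDC <;>
          rcases hrel D hDe.2 hDe.1 with ⟨hMD, -⟩ | hDD
        · rw [hgd C hMC, hgd D hMD]
          exact Finset.union_subset_union (Finset.sdiff_subset_sdiff hCD subset_rfl)
            subset_rfl
        · exact absurd (hMC.trans hCD) (hnotsub D hDD)
        · rw [hgd' C hDC, hgd D hMD]
          refine subset_trans ?_ Finset.subset_union_left
          intro y hy
          exact Finset.mem_sdiff.mpr ⟨hCD hy, Finset.disjoint_right.mp hDC hy⟩
        · rw [hgd' C hDC, hgd' D hDD]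
          exact hCD
      rcases hlam A hAe.2 B hBe.2 with h | h | h
      · exact Or.inl (main A B hA hB h)
      · exact Or.inr (Or.inl (main B A hB hA h))
      · refine Or.inr (Or.inr ?_)
        rcases hrel A hAe.2 hAe.1 with ⟨hMA, -⟩ | hDA <;>
          rcases hrel B hBe.2 hBe.1 with ⟨hMB, -⟩ | hDB
        · exfalso
          obtain ⟨y, hyM⟩ : M.Nonempty := ⟨x, hxM⟩
          exact (Finset.disjoint_left.mp h (hMA hyM)) (hMB hyM)
        · rw [hgd A hMA, hgd' B hDB]
          rw [Finset.disjoint_union_left]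
          constructor
          · exact h.mono Finset.sdiff_subset subset_rfl
          · rw [Finset.disjoint_singleton_left]
            exact Finset.disjoint_left.mp hDB hxM
        · rw [hgd' A hDA, hgd B hMB]
          rw [Finset.disjoint_union_right]
          constructor
          · exact h.mono subset_rfl Finset.sdiff_subset
          · rw [Finset.disjoint_singleton_right]
            exact Finset.disjoint_left.mp hDA hxM
        · rw [hgd' A hDA, hgd' B hDB]
          exact h
    have hV'N : V'.card ≤ N := by
      have hVc : 2 ≤ V.card := by omega
      omega
    have := ih V' hV'N T' hsub' hcard' hlam'
    have hV'pos : 1 ≤ V'.card := Finset.card_pos.mpr ⟨x, hxV'⟩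
    have hTc : 1 ≤ T.card := Finset.card_pos.mpr hTne
    omega

/-- mca as a function on unordered pairs. -/
def mcaS {n : ℕ} (F : Finset (Finset (Fin n))) : Sym2 (Fin n) → Finset (Fin n) :=
  Sym2.lift ⟨fun u v => mca F u v, fun u v => mca_comm F u v⟩

/-- Forgetting the membership proofs of a clade-graph vertex. -/
def ι {n : ℕ} {F₁ F₂ : Finset (Finset (Fin n))} :
    CladeVert F₁ F₂ → Finset (Fin n) ⊕ Finset (Fin n) :=
  Sum.map Subtype.val Subtype.val

lemma ι_injective {n : ℕ} {F₁ F₂ : Finset (Finset (Fin n))} :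
    Function.Injective (ι (F₁ := F₁) (F₂ := F₂)) := by
  rintro (⟨a, ha⟩ | ⟨a, ha⟩) (⟨b, hb⟩ | ⟨b, hb⟩) h <;>
    simp only [ι, Sum.map_inl, Sum.map_inr, Sum.inl.injEq, Sum.inr.injEq] at h <;>
    first
    | (subst h; rfl)
    | exact absurd h (by simp)
  all_goals (cases h <;> rfl)

/-- The unordered pair of clades associated to an edge. -/
def eφ {n : ℕ} (F₁ F₂ : Finset (Finset (Fin n))) (e : Sym2 (Fin n)) :
    Sym2 (Finset (Fin n) ⊕ Finset (Fin n)) :=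
  s(Sum.inl (mcaS F₁ e), Sum.inr (mcaS F₂ e))

lemma claimB {n : ℕ} {H : SimpleGraph (Fin n)} {F₁ F₂ : Finset (Finset (Fin n))}
    (h₁ : IsCladeFamily F₁) (h₂ : IsCladeFamily F₂) :
    ∀ e' ∈ H.edgeSet, ∃ e ∈ (rCladeGraph H F₁ F₂).edgeSet, Sym2.map ι e = eφ F₁ F₂ e' := by
  intro e'
  induction e' with
  | _ i j =>
    intro he'
    have hadj : H.Adj i j := (H.mem_edgeSet).mp he'
    have hij : i ≠ j := hadj.ne
    have hA := mca_mem_nsClades h₁ hij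
    have hB := mca_mem_nsClades h₂ hij
    refine ⟨s(Sum.inl ⟨mca F₁ i j, hA⟩, Sum.inr ⟨mca F₂ i j, hB⟩), ?_, ?_⟩
    · exact (SimpleGraph.mem_edgeSet _).mpr ((SimpleGraph.fromRel_adj _ _ _).mpr
        ⟨Sum.inl_ne_inr, Or.inl ⟨i, j, hij, hadj, hA, hB, rfl, rfl⟩⟩)
    · exact Sym2.map_pair_eq _ _ _

lemma claimA {n : ℕ} {H : SimpleGraph (Fin n)} {F₁ F₂ : Finset (Finset (Fin n))} :
    ∀ e ∈ (rCladeGraph H F₁ F₂).edgeSet, ∃ e' ∈ H.edgeSet, Sym2.map ι e = eφ F₁ F₂ e' := by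
  intro e
  induction e with
  | _ x y =>
    intro he
    rw [SimpleGraph.mem_edgeSet, rCladeGraph, SimpleGraph.fromRel_adj] at he
    obtain ⟨-, hrel | hrel⟩ := he <;>
    · obtain ⟨i, j, hij, hadj, hA, hB, hx, hy⟩ := hrel
      refine ⟨s(i, j), H.mem_edgeSet.mpr hadj, ?_⟩
      subst hx hy
      refine (Sym2.map_pair_eq _ _ _).trans ?_
      first
      | rfl
      | exact Sym2.eq_swap

lemma S_bound {n : ℕ} {F : Finset (Finset (Fin n))} (hF : IsCladeFamily F)
    (V : Finset (Fin n)) (S : Finset (Finset (Fin n)))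
    (hwit : ∀ A ∈ S, ∃ i j : Fin n, i ≠ j ∧ i ∈ V ∧ j ∈ V ∧ A = mca F i j) :
    S.card ≤ V.card - 1 := by
  classical
  have hSF : ∀ A ∈ S, A ∈ F := by
    intro A hA
    obtain ⟨i, j, -, -, -, rfl⟩ := hwit A hA
    exact (mca_spec hF i j).1
  have hinj : ∀ A ∈ S, ∀ B ∈ S, A ∩ V = B ∩ V → A = B := by
    intro A hA B hB hAB
    obtain ⟨i, j, hij, hiV, hjV, rfl⟩ := hwit A hA
    obtain ⟨k, l, hkl, hkV, hlV, rfl⟩ := hwit B hB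
    obtain ⟨hF₁, hu₁, hv₁, hmin₁⟩ := mca_spec hF i j
    obtain ⟨hF₂, hu₂, hv₂, hmin₂⟩ := mca_spec hF k l
    apply subset_antisymm
    · apply hmin₁ _ hF₂
      · have : i ∈ mca F i j ∩ V := Finset.mem_inter.mpr ⟨hu₁, hiV⟩
        rw [hAB] at this
        exact (Finset.mem_inter.mp this).1
      · have : j ∈ mca F i j ∩ V := Finset.mem_inter.mpr ⟨hv₁, hjV⟩
        rw [hAB] at this
        exact (Finset.mem_inter.mp this).1
    · apply hmin₂ _ hF₁
      · have : k ∈ mca F k l ∩ V := Finset.mem_inter.mpr ⟨hu₂, hkV⟩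
        rw [← hAB] at this
        exact (Finset.mem_inter.mp this).1
      · have : l ∈ mca F k l ∩ V := Finset.mem_inter.mpr ⟨hv₂, hlV⟩
        rw [← hAB] at this
        exact (Finset.mem_inter.mp this).1
  have hcard : S.card = (S.image (· ∩ V)).card := by
    rw [Finset.card_image_of_injOn (fun A hA B hB => hinj A hA B hB)]
  rw [hcard]
  apply laminar_bound V.card V le_rfl
  · intro A' hA'
    obtain ⟨A, hA, rfl⟩ := Finset.mem_image.mp hA'
    exact Finset.inter_subset_right
  · intro A' hA'
    obtain ⟨A, hA, rfl⟩ := Finset.mem_image.mp hA'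
    obtain ⟨i, j, hij, hiV, hjV, rfl⟩ := hwit A hA
    obtain ⟨-, hu, hv, -⟩ := mca_spec hF i j
    have hsub : ({i, j} : Finset (Fin n)) ⊆ mca F i j ∩ V := by
      intro z hz
      rcases Finset.mem_insert.mp hz with rfl | hz
      · exact Finset.mem_inter.mpr ⟨hu, hiV⟩
      · rw [Finset.mem_singleton.mp hz]
        exact Finset.mem_inter.mpr ⟨hv, hjV⟩
    calc 2 = ({i, j} : Finset (Fin n)).card := by
            rw [Finset.card_insert_of_notMem (by simpa), Finset.card_singleton]
      _ ≤ _ := Finset.card_le_card hsub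
  · intro A' hA' B' hB'
    obtain ⟨A, hA, rfl⟩ := Finset.mem_image.mp hA'
    obtain ⟨B, hB, rfl⟩ := Finset.mem_image.mp hB'
    rcases hF.2.2 A (hSF A hA) B (hSF B hB) with h | h | h
    · exact Or.inl (Finset.inter_subset_inter h subset_rfl)
    · exact Or.inr (Or.inl (Finset.inter_subset_inter h subset_rfl))
    · exact Or.inr (Or.inr (h.mono Finset.inter_subset_left Finset.inter_subset_left))

lemma main {n : ℕ} (H : SimpleGraph (Fin n)) (hH : ¬ IsLaman n H)
    (F₁ F₂ : Finset (Finset (Fin n)))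
    (h₁ : IsCladeFamily F₁) (h₂ : IsCladeFamily F₂) :
    ¬ RCladeGraphIsTree H F₁ F₂ := by
  rintro ⟨hconn, hVcard, hEcard⟩
  apply hH
  classical
  haveI : Fintype (CladeVert F₁ F₂) := by unfold CladeVert; infer_instance
  haveI : DecidableEq (CladeVert F₁ F₂) := by unfold CladeVert; infer_instance
  haveI : Fintype (rCladeGraph H F₁ F₂).edgeSet := Fintype.ofFinite _
  haveI : Fintype H.edgeSet := Fintype.ofFinite _
  have hne : Nonempty (CladeVert F₁ F₂) := hconn.nonempty
  have hcardV : Fintype.card (CladeVert F₁ F₂) = 2 * n - 2 := by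
    rw [← Nat.card_eq_fintype_card]; exact hVcard
  have hpos : 0 < Fintype.card (CladeVert F₁ F₂) := Fintype.card_pos
  have hn2 : 2 ≤ n := by omega
  have hHEF : H.edgeFinset.card = 2 * n - 3 := by
    rw [SimpleGraph.edgeFinset_card, ← Nat.card_eq_fintype_card]; exact hEcard
  have hGN : Nat.card (rCladeGraph H F₁ F₂).edgeSet
      = (rCladeGraph H F₁ F₂).edgeFinset.card := by
    rw [SimpleGraph.edgeFinset_card, Nat.card_eq_fintype_card]
  -- image equality
  have himage : (rCladeGraph H F₁ F₂).edgeFinset.image (Sym2.map ι)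
      = H.edgeFinset.image (eφ F₁ F₂) := by
    ext t
    simp only [Finset.mem_image, SimpleGraph.mem_edgeFinset]
    constructor
    · rintro ⟨e, he, rfl⟩
      obtain ⟨e', he', heq⟩ := claimA e he
      exact ⟨e', he', heq.symm⟩
    · rintro ⟨e', he', rfl⟩
      obtain ⟨e, he, heq⟩ := claimB h₁ h₂ e' he'
      exact ⟨e, he, heq⟩
  have hGEFcard : (rCladeGraph H F₁ F₂).edgeFinset.card
      = (H.edgeFinset.image (eφ F₁ F₂)).card := by
    rw [← himage, Finset.card_image_of_injective _ (Sym2.map.injective ι_injective)]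
  have himle : (H.edgeFinset.image (eφ F₁ F₂)).card ≤ H.edgeFinset.card :=
    Finset.card_image_le
  have hAcard := card_le_of_connected hconn
  rw [hGN] at hAcard
  have hGEF23 : (rCladeGraph H F₁ F₂).edgeFinset.card = 2 * n - 3 := by omega
  have hφinj : Set.InjOn (eφ F₁ F₂) H.edgeFinset := by
    apply Finset.injOn_of_card_image_eq
    omega
  have hacyc : (rCladeGraph H F₁ F₂).IsAcyclic := by
    apply isAcyclic_of_card hconn
    rw [hGN]
    omega
  refine ⟨hEcard, ?_⟩
  intro V hV2
  set EW := H.edgeFinset.filter (fun e => ∀ v ∈ e, v ∈ V) with hEW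
  have hEWwithin : edgesWithin H V = EW.card := by
    rw [edgesWithin, Nat.card_eq_fintype_card, Fintype.card_subtype]
    congr 1
    ext e
    simp [hEW, SimpleGraph.mem_edgeFinset]
  -- the clade images
  set S₁ := EW.image (mcaS F₁) with hS₁def
  set S₂ := EW.image (mcaS F₂) with hS₂def
  have hwit : ∀ (F : Finset (Finset (Fin n))), ∀ A ∈ EW.image (mcaS F),
      ∃ i j : Fin n, i ≠ j ∧ i ∈ V ∧ j ∈ V ∧ A = mca F i j := by
    intro F A hA
    obtain ⟨e, he, rfl⟩ := Finset.mem_image.mp hA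
    rw [hEW, Finset.mem_filter, SimpleGraph.mem_edgeFinset] at he
    obtain ⟨hee, hev⟩ := he
    revert hee hev
    induction e with
    | _ i j =>
      intro hee hev
      have hadj : H.Adj i j := H.mem_edgeSet.mp hee
      exact ⟨i, j, hadj.ne, hev i (Sym2.mem_mk_left i j), hev j (Sym2.mem_mk_right i j),
        rfl⟩
  have hS₁card : S₁.card ≤ V.card - 1 := S_bound h₁ V S₁ (hwit F₁)
  have hS₂card : S₂.card ≤ V.card - 1 := S_bound h₂ V S₂ (hwit F₂)
  -- edges of the clade graph corresponding to EW
  set E'' := (rCladeGraph H F₁ F₂).edgeFinset.filter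
    (fun e => Sym2.map ι e ∈ EW.image (eφ F₁ F₂)) with hE''
  have hE''img : E''.image (Sym2.map ι) = EW.image (eφ F₁ F₂) := by
    apply subset_antisymm
    · intro t ht
      obtain ⟨e, he, rfl⟩ := Finset.mem_image.mp ht
      exact (Finset.mem_filter.mp he).2
    · intro t ht
      obtain ⟨e', he', rfl⟩ := Finset.mem_image.mp ht
      have he'E : e' ∈ H.edgeSet := by
        have := (Finset.mem_filter.mp he').1
        rwa [SimpleGraph.mem_edgeFinset] at this
      obtain ⟨e, he, heq⟩ := claimB h₁ h₂ e' he'E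
      apply Finset.mem_image.mpr
      refine ⟨e, ?_, heq⟩
      rw [hE'', Finset.mem_filter, SimpleGraph.mem_edgeFinset]
      exact ⟨he, by rw [heq]; exact Finset.mem_image_of_mem _ he'⟩
  have hE''card : E''.card = EW.card := by
    have h1 : E''.card = (E''.image (Sym2.map ι)).card := by
      rw [Finset.card_image_of_injective _ (Sym2.map.injective ι_injective)]
    have h2 : (EW.image (eφ F₁ F₂)).card = EW.card := by
      apply Finset.card_image_of_injOn
      apply hφinj.mono
      intro e he
      exact (Finset.mem_filter.mp he).1
    rw [h1, hE''img, h2]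
  set W := Finset.univ.filter
    (fun z : CladeVert F₁ F₂ => ι z ∈ S₁.image Sum.inl ∪ S₂.image Sum.inr) with hW
  have hWcard : W.card ≤ S₁.card + S₂.card := by
    have h1 : W.card = (W.image ι).card := by
      rw [Finset.card_image_of_injective _ ι_injective]
    have h2 : W.image ι ⊆ S₁.image Sum.inl ∪ S₂.image Sum.inr := by
      intro t ht
      obtain ⟨z, hz, rfl⟩ := Finset.mem_image.mp ht
      exact (Finset.mem_filter.mp hz).2
    calc W.card = (W.image ι).card := h1
      _ ≤ (S₁.image Sum.inl ∪ S₂.image Sum.inr).card := Finset.card_le_card h2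
      _ ≤ (S₁.image Sum.inl).card + (S₂.image Sum.inr).card := Finset.card_union_le _ _
      _ ≤ S₁.card + S₂.card := by
          gcongr <;> exact Finset.card_image_le
  have hforest : E''.card ≤ W.card - 1 := by
    apply forest_edge_bound hconn hacyc
    · intro e he
      have := (Finset.mem_filter.mp he).1
      rwa [SimpleGraph.mem_edgeFinset] at this
    · intro e he x hx
      have hmem := (Finset.mem_filter.mp he).2
      obtain ⟨e', he', heq⟩ := Finset.mem_image.mp hmem
      have hιx : ι x ∈ Sym2.map ι e := Sym2.mem_map.mpr ⟨x, hx, rfl⟩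
      rw [← heq] at hιx
      rw [hW, Finset.mem_filter]
      refine ⟨Finset.mem_univ _, ?_⟩
      rcases Sym2.mem_iff.mp hιx with h | h
      · rw [h]
        apply Finset.mem_union_left
        exact Finset.mem_image_of_mem _ (by rw [hS₁def]; exact Finset.mem_image_of_mem _ he')
      · rw [h]
        apply Finset.mem_union_right
        exact Finset.mem_image_of_mem _ (by rw [hS₂def]; exact Finset.mem_image_of_mem _ he')
  rw [hEWwithin]
  omega


end NLNT

/-- If `H` is not Laman, then for every pair of rooted trees `T₁, T₂` on leaf set `[n]`
the restricted clade graph `G^H_{T₁,T₂}` is not a tree. -/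
theorem not_laman_not_tree {n : ℕ} (H : SimpleGraph (Fin n)) (hH : ¬ IsLaman n H)
    (F₁ F₂ : Finset (Finset (Fin n)))
    (h₁ : IsCladeFamily F₁) (h₂ : IsCladeFamily F₂) :
    ¬ RCladeGraphIsTree H F₁ F₂ :=
  NLNT.main H hH F₁ F₂ h₁ h₂
end
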